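/- arXiv:1401.4739 — 8 statements merged into one kernel-verified Lean document; each statement's English description precedes it below -/
import Mathlib

section
/- Let M be a binary matrix with corresponding bipartite graph G(M), let w be a black vertex and let x, y be two distinct white neighbors of w. Let H be the subgraph of G(M) induced by (R \ (N(x) ∩ N(y))) ∪ (C \ N(w)) ∪ {x,y}, where R and C are the sets of black and white vertices. If p is a shortest path between x and y in H, then the cycle obtained from p by adding the vertex w and the edges {w,x} and {w,y} is an induced (chordless) cycle of G(M) of length at least 6. -/
open SimpleGraph

/-- The bipartite graph corresponding to a binary matrix: black vertices are rows
(`Sum.inl`), white vertices are columns (`Sum.inr`), and row `i` is adjacent to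
column `j` iff `M i j = true`. -/
def graphOf {m n : ℕ} (M : Fin m → Fin n → Bool) : SimpleGraph (Fin m ⊕ Fin n) :=
  SimpleGraph.fromRel (fun p q => ∃ i j, p = Sum.inl i ∧ q = Sum.inr j ∧ M i j = true)

/-- The vertex set `(R \ (N(x) ∩ N(y))) ∪ (C \ N(w)) ∪ {x, y}`, where `R` is the set of
black (row) vertices and `C` the set of white (column) vertices of `G(M)`. -/
def tuckerSet {m n : ℕ} (M : Fin m → Fin n → Bool) (w : Fin m) (x y : Fin n) :
    Set (Fin m ⊕ Fin n) :=
  (Sum.inl '' {r | ¬((graphOf M).Adj (Sum.inl r) (Sum.inr x) ∧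
      (graphOf M).Adj (Sum.inl r) (Sum.inr y))}) ∪
    (Sum.inr '' {c | ¬(graphOf M).Adj (Sum.inl w) (Sum.inr c)}) ∪
    {Sum.inr x, Sum.inr y}

section Aux
variable {m n : ℕ} {M : Fin m → Fin n → Bool}

lemma graphOf_adj_cases {a b : Fin m ⊕ Fin n} (h : (graphOf M).Adj a b) :
    (∃ i j, a = Sum.inl i ∧ b = Sum.inr j) ∨ (∃ i j, b = Sum.inl i ∧ a = Sum.inr j) := by
  rw [graphOf, fromRel_adj] at h
  rcases h.2 with ⟨i, j, h1, h2, _⟩ | ⟨i, j, h1, h2, _⟩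
  · exact Or.inl ⟨i, j, h1, h2⟩
  · exact Or.inr ⟨i, j, h1, h2⟩

lemma graphOf_isLeft {a b : Fin m ⊕ Fin n} (h : (graphOf M).Adj a b) :
    a.isLeft ≠ b.isLeft := by
  rcases graphOf_adj_cases h with ⟨i, j, rfl, rfl⟩ | ⟨i, j, rfl, rfl⟩ <;> simp

lemma walk_parity {a b : Fin m ⊕ Fin n} (q : (graphOf M).Walk a b) :
    q.length % 2 = if a.isLeft = b.isLeft then 0 else 1 := by
  induction q with
  | nil => simp
  | @cons a z b h r ih =>
    have hne : a.isLeft ≠ z.isLeft := graphOf_isLeft h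
    rw [SimpleGraph.Walk.length_cons]
    by_cases hzb : z.isLeft = b.isLeft
    · rw [if_pos hzb] at ih
      rw [if_neg (fun hh => hne (hh.trans hzb.symm))]
      omega
    · rw [if_neg hzb] at ih
      have hab : a.isLeft = b.isLeft := by
        cases ha : a.isLeft <;> cases hz : z.isLeft <;> cases hb : b.isLeft <;> simp_all
      rw [if_pos hab]
      omega

lemma shortcut {V : Type*} [DecidableEq V] {G : SimpleGraph V} {u v : V} :
    ∀ {a b : V} (p : G.Walk a b), u ∈ p.support → v ∈ p.support → G.Adj u v →
      s(u, v) ∉ p.edges → ∃ q : G.Walk a b, q.length < p.length := by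
  intro a b p
  induction p with
  | nil =>
    intro hu hv huv _
    simp only [SimpleGraph.Walk.support_nil, List.mem_singleton] at hu hv
    subst hu; subst hv; exact absurd rfl huv.ne
  | @cons a z b h r ih =>
    intro hu hv huv he
    rw [SimpleGraph.Walk.support_cons, List.mem_cons] at hu hv
    rw [SimpleGraph.Walk.edges_cons, List.mem_cons] at he
    push_neg at he
    obtain ⟨he1, he2⟩ := he
    rcases hu with rfl | hu
    · rcases hv with rfl | hv
      · exact absurd rfl huv.ne
      · refine ⟨SimpleGraph.Walk.cons huv (r.dropUntil v hv), ?_⟩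
        have hspec := congrArg SimpleGraph.Walk.length (r.take_spec hv)
        rw [SimpleGraph.Walk.length_append] at hspec
        have hz : (r.takeUntil v hv).length ≠ 0 := by
          intro h0
          have hzv : z = v := SimpleGraph.Walk.eq_of_length_eq_zero h0
          subst hzv
          exact he1 rfl
        simp only [SimpleGraph.Walk.length_cons]
        omega
    · rcases hv with rfl | hv
      · refine ⟨SimpleGraph.Walk.cons huv.symm (r.dropUntil u hu), ?_⟩
        have hspec := congrArg SimpleGraph.Walk.length (r.take_spec hu)
        rw [SimpleGraph.Walk.length_append] at hspec
        have hz : (r.takeUntil u hu).length ≠ 0 := by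
          intro h0
          have hzu : z = u := SimpleGraph.Walk.eq_of_length_eq_zero h0
          subst hzu
          exact he1 Sym2.eq_swap
        simp only [SimpleGraph.Walk.length_cons]
        omega
      · obtain ⟨q, hq⟩ := ih hu hv huv he2
        exact ⟨SimpleGraph.Walk.cons h q, by simp only [SimpleGraph.Walk.length_cons]; omega⟩

lemma inl_mem_tuckerSet {w : Fin m} {x y : Fin n} {r : Fin m}
    (h : Sum.inl r ∈ tuckerSet M w x y) :
    ¬((graphOf M).Adj (Sum.inl r) (Sum.inr x) ∧ (graphOf M).Adj (Sum.inl r) (Sum.inr y)) := by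
  simp only [tuckerSet, Set.mem_union, Set.mem_image, Set.mem_setOf_eq, Set.mem_insert_iff,
    Set.mem_singleton_iff] at h
  rcases h with (⟨r', hr', heq⟩ | ⟨c, hc, heq⟩) | (heq | heq) <;> simp_all

lemma inr_mem_tuckerSet {w : Fin m} {x y : Fin n} {c : Fin n}
    (h : Sum.inr c ∈ tuckerSet M w x y) (hadj : (graphOf M).Adj (Sum.inl w) (Sum.inr c)) :
    c = x ∨ c = y := by
  simp only [tuckerSet, Set.mem_union, Set.mem_image, Set.mem_setOf_eq, Set.mem_insert_iff,
    Set.mem_singleton_iff] at h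
  rcases h with (⟨r', hr', heq⟩ | ⟨c', hc', heq⟩) | (heq | heq) <;> simp_all

lemma inl_w_not_mem {w : Fin m} {x y : Fin n}
    (hwx : (graphOf M).Adj (Sum.inl w) (Sum.inr x))
    (hwy : (graphOf M).Adj (Sum.inl w) (Sum.inr y)) :
    Sum.inl w ∉ tuckerSet M w x y :=
  fun h => inl_mem_tuckerSet h ⟨hwx, hwy⟩

lemma no_length_two_walk {w : Fin m} {x y : Fin n}
    (q : (graphOf M).Walk (Sum.inr x) (Sum.inr y))
    (hq : ∀ a ∈ q.support, a ∈ tuckerSet M w x y) : q.length ≠ 2 := by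
  intro h2
  cases q with
  | nil => simp at h2
  | @cons _ v _ h1 r =>
    cases r with
    | nil => simp at h2
    | @cons _ v2 _ hmid r2 =>
      have hr2 : r2.length = 0 := by
        simp only [SimpleGraph.Walk.length_cons] at h2; omega
      have hv2 : v2 = Sum.inr y := SimpleGraph.Walk.eq_of_length_eq_zero hr2
      subst hv2
      cases v with
      | inr c =>
        rcases graphOf_adj_cases h1 with ⟨i, j, hc1, _⟩ | ⟨i, j, _, hc2⟩ <;> simp_all
      | inl rr =>
        exact inl_mem_tuckerSet (hq (Sum.inl rr) (by simp)) ⟨h1.symm, hmid⟩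

end Aux

lemma mem_tuckerSet_x {m n : ℕ} (M : Fin m → Fin n → Bool) (w : Fin m) (x y : Fin n) :
    Sum.inr x ∈ tuckerSet M w x y := Or.inr (Or.inl rfl)

lemma mem_tuckerSet_y {m n : ℕ} (M : Fin m → Fin n → Bool) (w : Fin m) (x y : Fin n) :
    Sum.inr y ∈ tuckerSet M w x y := Or.inr (Or.inr rfl)

/-- The inclusion homomorphism from an induced subgraph into the ambient graph. -/
def inducedHom {V : Type*} (G : SimpleGraph V) (s : Set V) : G.induce s →g G :=
  ⟨Subtype.val, fun h => h⟩

/-- A closed walk is an induced (chordless) cycle if it is a cycle and every edge of the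
graph between vertices of the cycle is an edge of the cycle. -/
def IsInducedCycle {V : Type*} {G : SimpleGraph V} {v : V} (c : G.Walk v v) : Prop :=
  c.IsCycle ∧ ∀ a b, a ∈ c.support → b ∈ c.support → G.Adj a b → c.toSubgraph.Adj a b

/-- If `p` is a shortest path between `x` and `y` in the induced subgraph
`H = G(M)[(R \ (N(x) ∩ N(y))) ∪ (C \ N(w)) ∪ {x,y}]`, then the closed walk obtained
from `p` by adding the vertex `w` and the edges `{w,x}`, `{w,y}` is an induced
(chordless) cycle of `G(M)` of length at least `6`. -/
theorem shortest_path_gives_induced_cycle {m n : ℕ} (M : Fin m → Fin n → Bool)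
    (w : Fin m) (x y : Fin n) (hxy : x ≠ y)
    (hwx : (graphOf M).Adj (Sum.inl w) (Sum.inr x))
    (hwy : (graphOf M).Adj (Sum.inl w) (Sum.inr y))
    (p : ((graphOf M).induce (tuckerSet M w x y)).Walk
      ⟨Sum.inr x, mem_tuckerSet_x M w x y⟩ ⟨Sum.inr y, mem_tuckerSet_y M w x y⟩)
    (hp : p.IsPath)
    (hmin : ∀ q : ((graphOf M).induce (tuckerSet M w x y)).Walk
      ⟨Sum.inr x, mem_tuckerSet_x M w x y⟩ ⟨Sum.inr y, mem_tuckerSet_y M w x y⟩,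
      q.IsPath → p.length ≤ q.length) :
    let c : (graphOf M).Walk (Sum.inl w) (Sum.inl w) :=
      SimpleGraph.Walk.cons hwx
        ((p.map (inducedHom (graphOf M) (tuckerSet M w x y))).concat hwy.symm)
    IsInducedCycle c ∧ 6 ≤ c.length := by
  set p' := p.map (inducedHom (graphOf M) (tuckerSet M w x y)) with hp'def
  set q : (graphOf M).Walk (Sum.inr x) (Sum.inl w) := p'.concat hwy.symm with hqdef
  show IsInducedCycle (SimpleGraph.Walk.cons hwx q) ∧
    6 ≤ (SimpleGraph.Walk.cons hwx q).length
  -- basic facts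
  have hp' : p'.IsPath := SimpleGraph.Walk.map_isPath_of_injective Subtype.val_injective hp
  have hsupp : ∀ a ∈ p'.support, a ∈ tuckerSet M w x y := by
    intro a ha
    rw [hp'def, SimpleGraph.Walk.support_map, List.mem_map] at ha
    obtain ⟨⟨a', ha'⟩, _, rfl⟩ := ha
    exact ha'
  have hwp' : Sum.inl w ∉ p'.support := fun h => inl_w_not_mem hwx hwy (hsupp _ h)
  -- length facts
  have hpar : p'.length % 2 = 0 := by
    have := walk_parity p'
    rw [this]; rfl
  have hlen0 : p'.length ≠ 0 := by
    intro h0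
    exact hxy (Sum.inr.inj (SimpleGraph.Walk.eq_of_length_eq_zero h0))
  have hlen2 : p'.length ≠ 2 := no_length_two_walk p' hsupp
  have hlen4 : 4 ≤ p'.length := by omega
  -- cycle
  have hqpath : q.IsPath := by
    erw [SimpleGraph.Walk.isPath_def, hqdef, SimpleGraph.Walk.support_concat,
      List.nodup_append]
    refine ⟨hp'.support_nodup, by simp, ?_⟩
    intro a ha b hb hab
    rw [List.mem_singleton] at hb
    subst hb
    exact hwp' (hab ▸ ha)
  have hqedge : s(Sum.inl w, Sum.inr x) ∉ q.edges := by
    erw [hqdef, SimpleGraph.Walk.edges_concat, List.concat_eq_append, List.mem_append]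
    rintro (h | h)
    · exact hwp' (p'.fst_mem_support_of_mem_edges h)
    · rw [List.mem_singleton, Sym2.eq_iff] at h
      rcases h with ⟨h1, -⟩ | ⟨-, h2⟩
      · exact Sum.inl_ne_inr h1
      · exact hxy (Sum.inr.inj h2)
  have hcyc : (SimpleGraph.Walk.cons hwx q).IsCycle :=
    (SimpleGraph.Walk.cons_isCycle_iff q hwx).mpr ⟨hqpath, hqedge⟩
  -- edge membership helper
  have hedge_adj : ∀ a b : Fin m ⊕ Fin n, s(a, b) ∈ (SimpleGraph.Walk.cons hwx q).edges →
      (SimpleGraph.Walk.cons hwx q).toSubgraph.Adj a b := by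
    intro a b h
    exact (SimpleGraph.Subgraph.mem_edgeSet).mp
      (((SimpleGraph.Walk.cons hwx q).mem_edges_toSubgraph).mpr h)
  have hcedges : (SimpleGraph.Walk.cons hwx q).edges =
      s(Sum.inl w, Sum.inr x) :: (p'.edges ++ [s(Sum.inr y, Sum.inl w)]) := by
    erw [SimpleGraph.Walk.edges_cons, hqdef, SimpleGraph.Walk.edges_concat,
      List.concat_eq_append]
    rfl
  have hcsup : ∀ z, z ∈ (SimpleGraph.Walk.cons hwx q).support →
      z = Sum.inl w ∨ z ∈ p'.support := by
    intro z hz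
    erw [SimpleGraph.Walk.support_cons, List.mem_cons, hqdef,
      SimpleGraph.Walk.support_concat, List.mem_append,
      List.mem_singleton] at hz
    tauto
  -- the key chord arguments
  have key_w : ∀ b : Fin m ⊕ Fin n, b ∈ p'.support → (graphOf M).Adj (Sum.inl w) b →
      (SimpleGraph.Walk.cons hwx q).toSubgraph.Adj (Sum.inl w) b := by
    intro b hb hab
    have hbS := hsupp b hb
    rcases graphOf_adj_cases hab with ⟨i, j, hi, hj⟩ | ⟨i, j, hi, hj⟩
    · subst hj
      rcases inr_mem_tuckerSet hbS hab with rfl | rfl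
      · exact hedge_adj _ _ (by rw [hcedges]; exact List.mem_cons_self)
      · refine hedge_adj _ _ ?_
        rw [hcedges]
        refine List.mem_cons_of_mem _ (List.mem_append_right _ ?_)
        rw [List.mem_singleton]
        exact Sym2.eq_swap
    · exact absurd hj (by simp)
  have key_p : ∀ a b : Fin m ⊕ Fin n, a ∈ p'.support → b ∈ p'.support →
      (graphOf M).Adj a b → (SimpleGraph.Walk.cons hwx q).toSubgraph.Adj a b := by
    intro a b ha hb hab
    rw [hp'def, SimpleGraph.Walk.support_map, List.mem_map] at ha hb
    obtain ⟨⟨a, haS⟩, hamem, rfl⟩ := ha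
    obtain ⟨⟨b, hbS⟩, hbmem, rfl⟩ := hb
    have hHadj : ((graphOf M).induce (tuckerSet M w x y)).Adj ⟨a, haS⟩ ⟨b, hbS⟩ := hab
    have hedge : s((⟨a, haS⟩ : tuckerSet M w x y), ⟨b, hbS⟩) ∈ p.edges := by
      by_contra he
      obtain ⟨q', hq'⟩ := shortcut p hamem hbmem hHadj he
      have h1 := hmin q'.bypass q'.bypass_isPath
      have h2 := q'.length_bypass_le
      omega
    refine hedge_adj _ _ ?_
    rw [hcedges]
    refine List.mem_cons_of_mem _ (List.mem_append_left _ ?_)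
    rw [hp'def, SimpleGraph.Walk.edges_map]
    have := List.mem_map_of_mem (f := Sym2.map (inducedHom (graphOf M) (tuckerSet M w x y)))
      hedge
    rwa [Sym2.map_pair_eq] at this
  refine ⟨⟨hcyc, ?_⟩, ?_⟩
  · intro a b ha hb hab
    rcases hcsup a ha with rfl | ha' <;> rcases hcsup b hb with rfl | hb'
    · exact absurd rfl hab.ne
    · exact key_w b hb' hab
    · exact (key_w a ha' hab.symm).symm
    · exact key_p a b ha' hb' hab
  · erw [SimpleGraph.Walk.length_cons, hqdef, SimpleGraph.Walk.length_concat]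
    have h6 : 6 ≤ p'.length + 1 + 1 := by omega
    exact h6
end

section
/- Let M be a binary matrix with corresponding bipartite graph G(M), let w be a black vertex and let x, y be two distinct white neighbors of w. Let H be the subgraph of G(M) induced by (R \ (N(x) ∩ N(y))) ∪ (C \ N(w)) ∪ {x,y}, where R and C are the sets of black and white vertices. If Z is an induced (chordless) cycle of G(M) of length at least 6 that contains w and in which the two neighbors of w on Z are x and y, then every vertex of Z other than w belongs to H; consequently Z minus w is an x–y path in H, and the length of Z is at least dist_H(x,y) + 2. -/
open SimpleGraph

/-- Lift a walk whose support lies in `s` to the induced subgraph on `s`. -/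
def induceLift {V : Type*} {G : SimpleGraph V} {s : Set V} :
    ∀ {u v : V} (p : G.Walk u v), (∀ a ∈ p.support, a ∈ s) →
      ∀ (hu : u ∈ s) (hv : v ∈ s), (G.induce s).Walk ⟨u, hu⟩ ⟨v, hv⟩
  | _, _, Walk.nil, _, _, _ => Walk.nil
  | _, _, Walk.cons ha p, h, hu, hv =>
      Walk.cons (by exact ha)
        (induceLift p (fun a hh => h a (List.mem_cons_of_mem _ hh))
          (h _ (by simp)) hv)

lemma induceLift_support_map {V : Type*} {G : SimpleGraph V} {s : Set V} :
    ∀ {u v : V} (p : G.Walk u v) (h : ∀ a ∈ p.support, a ∈ s) (hu : u ∈ s) (hv : v ∈ s),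
      (induceLift p h hu hv).support.map Subtype.val = p.support
  | _, _, Walk.nil, _, _, _ => rfl
  | _, _, Walk.cons ha p, h, hu, hv => by
      rw [induceLift, Walk.support_cons]
      exact congrArg (_ :: ·) (induceLift_support_map p _ _ hv)

lemma induceLift_length {V : Type*} {G : SimpleGraph V} {s : Set V} :
    ∀ {u v : V} (p : G.Walk u v) (h : ∀ a ∈ p.support, a ∈ s) (hu : u ∈ s) (hv : v ∈ s),
      (induceLift p h hu hv).length = p.length
  | _, _, Walk.nil, _, _, _ => rfl
  | _, _, Walk.cons ha p, h, hu, hv => by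
      rw [induceLift, Walk.length_cons]
      exact congrArg (· + 1) (induceLift_length p _ _ hv)

/-- In a path, an edge incident to the starting vertex must be the first edge. -/
lemma path_first_edge {V : Type*} {G : SimpleGraph V} {u v a : V} :
    ∀ (P : G.Walk u v), P.IsPath → s(u, a) ∈ P.edges →
      ∃ (h : G.Adj u a) (P' : G.Walk a v), P = Walk.cons h P'
  | Walk.nil, _, he => by simp at he
  | Walk.cons h' P', hp, he => by
      rw [Walk.edges_cons, List.mem_cons] at he
      rcases he with he | he
      · rw [Sym2.eq_iff] at he
        rcases he with ⟨-, rfl⟩ | ⟨h1, rfl⟩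
        · exact ⟨h', P', rfl⟩
        · exact absurd h1 h'.ne
      · exact absurd (P'.fst_mem_support_of_mem_edges he)
          ((Walk.cons_isPath_iff _ _).mp hp).2

lemma tucker_core {m n : ℕ} (M : Fin m → Fin n → Bool)
    (w : Fin m) (x y : Fin n) (hxy : x ≠ y)
    (Z : (graphOf M).Walk (Sum.inl w) (Sum.inl w))
    (hZlen : 6 ≤ Z.length)
    (hZinduced : ∀ a b, a ∈ Z.support → b ∈ Z.support →
      (graphOf M).Adj a b → Z.toSubgraph.Adj a b)
    (hZnbrs : ∀ v, Z.toSubgraph.Adj (Sum.inl w) v ↔ (v = Sum.inr x ∨ v = Sum.inr y))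
    (q0 : (graphOf M).Walk (Sum.inr x) (Sum.inr y))
    (hq0 : q0.IsPath)
    (hsupp : ∀ v, v ∈ Z.support ↔ v = Sum.inl w ∨ v ∈ q0.support)
    (hwq0 : Sum.inl w ∉ q0.support)
    (hlen : Z.length = q0.length + 2)
    (hedges : ∀ a b : Fin m ⊕ Fin n, s(a, b) ∈ Z.edges → a ≠ Sum.inl w → b ≠ Sum.inl w →
      s(a, b) ∈ q0.edges) :
    (∀ v ∈ Z.support, v ≠ Sum.inl w → v ∈ tuckerSet M w x y) ∧
    (∃ q : ((graphOf M).induce (tuckerSet M w x y)).Walk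
        ⟨Sum.inr x, mem_tuckerSet_x M w x y⟩ ⟨Sum.inr y, mem_tuckerSet_y M w x y⟩,
      q.IsPath ∧ (∀ v, v ∈ q.support.map Subtype.val ↔ (v ∈ Z.support ∧ v ≠ Sum.inl w)) ∧
      q.length + 2 = Z.length) ∧
    ((graphOf M).induce (tuckerSet M w x y)).dist
        ⟨Sum.inr x, mem_tuckerSet_x M w x y⟩ ⟨Sum.inr y, mem_tuckerSet_y M w x y⟩ + 2 ≤
      Z.length := by
  have part1 : ∀ v ∈ Z.support, v ≠ Sum.inl w → v ∈ tuckerSet M w x y := by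
    intro v hv hvw
    match v with
    | Sum.inr c =>
      by_cases hwc : (graphOf M).Adj (Sum.inl w) (Sum.inr c)
      · rcases (hZnbrs _).mp (hZinduced _ _ Z.start_mem_support hv hwc) with h | h
        · rw [h]; exact mem_tuckerSet_x M w x y
        · rw [h]; exact mem_tuckerSet_y M w x y
      · exact Or.inl (Or.inr ⟨c, hwc, rfl⟩)
    | Sum.inl a =>
      refine Or.inl (Or.inl ⟨a, ?_, rfl⟩)
      rintro ⟨hax, hay⟩
      have hxmem : Sum.inr x ∈ Z.support := (hsupp _).mpr (Or.inr q0.start_mem_support)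
      have hymem : Sum.inr y ∈ Z.support := (hsupp _).mpr (Or.inr q0.end_mem_support)
      have hax' : s(Sum.inl a, Sum.inr x) ∈ Z.edges :=
        Z.mem_edges_toSubgraph.mp (Subgraph.mem_edgeSet.mpr (hZinduced _ _ hv hxmem hax))
      have hay' : s(Sum.inl a, Sum.inr y) ∈ Z.edges :=
        Z.mem_edges_toSubgraph.mp (Subgraph.mem_edgeSet.mpr (hZinduced _ _ hv hymem hay))
      have hax2 : s(Sum.inl a, Sum.inr x) ∈ q0.edges := hedges _ _ hax' hvw (by simp)
      have hay2 : s(Sum.inl a, Sum.inr y) ∈ q0.edges := hedges _ _ hay' hvw (by simp)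
      obtain ⟨hadj1, c1, hc1⟩ := path_first_edge q0 hq0 (by rwa [Sym2.eq_swap] at hax2)
      subst hc1
      have hc1path : c1.IsPath := ((Walk.cons_isPath_iff _ _).mp hq0).1
      have hay3 : s(Sum.inl a, Sum.inr y) ∈ c1.edges := by
        rw [Walk.edges_cons, List.mem_cons] at hay2
        rcases hay2 with heq | h
        · exfalso
          rw [Sym2.eq_iff] at heq
          rcases heq with ⟨h1, -⟩ | ⟨-, h2⟩
          · exact Sum.inl_ne_inr h1
          · exact hxy (Sum.inr.inj h2).symm
        · exact h
      obtain ⟨hadj2, c2, hc2⟩ := path_first_edge c1 hc1path hay3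
      have hc2nil : c2 = Walk.nil := by
        apply Walk.isPath_iff_eq_nil.mp
        rw [hc2] at hc1path
        exact ((Walk.cons_isPath_iff _ _).mp hc1path).1
      rw [hc2, hc2nil] at hlen
      simp [Walk.length_cons] at hlen
      omega
  have hsub : ∀ a ∈ q0.support, a ∈ tuckerSet M w x y := fun a ha =>
    part1 a ((hsupp a).mpr (Or.inr ha)) (fun h => hwq0 (h ▸ ha))
  refine ⟨part1, ⟨induceLift q0 hsub (mem_tuckerSet_x M w x y) (mem_tuckerSet_y M w x y),
      ?_, ?_, ?_⟩, ?_⟩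
  · apply Walk.IsPath.mk'
    apply List.Nodup.of_map Subtype.val
    rw [induceLift_support_map]
    exact hq0.support_nodup
  · intro v
    rw [induceLift_support_map]
    constructor
    · intro hvq
      exact ⟨(hsupp v).mpr (Or.inr hvq), fun h => hwq0 (h ▸ hvq)⟩
    · rintro ⟨hz, hne⟩
      rcases (hsupp v).mp hz with h | h
      · exact absurd h hne
      · exact h
  · rw [induceLift_length]; omega
  · have hd := SimpleGraph.dist_le
      (induceLift q0 hsub (mem_tuckerSet_x M w x y) (mem_tuckerSet_y M w x y))
    rw [induceLift_length] at hd
    omega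

/-- If `Z` is an induced (chordless) cycle of `G(M)` of length at least `6` containing
the black vertex `w`, whose two neighbors on `Z` are the white vertices `x` and `y`,
then every vertex of `Z` other than `w` lies in
`H = G(M)[(R \ (N(x) ∩ N(y))) ∪ (C \ N(w)) ∪ {x,y}]`; consequently `Z` minus `w` is an
`x`–`y` path in `H`, and the length of `Z` is at least `dist_H(x,y) + 2`. -/
theorem induced_cycle_through_w_lies_in_tuckerSet {m n : ℕ} (M : Fin m → Fin n → Bool)
    (w : Fin m) (x y : Fin n) (hxy : x ≠ y)
    (hwx : (graphOf M).Adj (Sum.inl w) (Sum.inr x))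
    (hwy : (graphOf M).Adj (Sum.inl w) (Sum.inr y))
    (Z : (graphOf M).Walk (Sum.inl w) (Sum.inl w))
    (hZcycle : Z.IsCycle)
    (hZlen : 6 ≤ Z.length)
    (hZinduced : ∀ a b, a ∈ Z.support → b ∈ Z.support →
      (graphOf M).Adj a b → Z.toSubgraph.Adj a b)
    (hZnbrs : ∀ v, Z.toSubgraph.Adj (Sum.inl w) v ↔ (v = Sum.inr x ∨ v = Sum.inr y)) :
    (∀ v ∈ Z.support, v ≠ Sum.inl w → v ∈ tuckerSet M w x y) ∧
    (∃ q : ((graphOf M).induce (tuckerSet M w x y)).Walk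
        ⟨Sum.inr x, mem_tuckerSet_x M w x y⟩ ⟨Sum.inr y, mem_tuckerSet_y M w x y⟩,
      q.IsPath ∧ (∀ v, v ∈ q.support.map Subtype.val ↔ (v ∈ Z.support ∧ v ≠ Sum.inl w)) ∧
      q.length + 2 = Z.length) ∧
    ((graphOf M).induce (tuckerSet M w x y)).dist
        ⟨Sum.inr x, mem_tuckerSet_x M w x y⟩ ⟨Sum.inr y, mem_tuckerSet_y M w x y⟩ + 2 ≤
      Z.length := by
  obtain ⟨sv, h1, p, rfl⟩ := Walk.not_nil_iff.mp hZcycle.not_nil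
  have hp_path : p.IsPath := ((Walk.cons_isCycle_iff p h1).mp hZcycle).1
  have hplen : 5 ≤ p.length := by
    rw [Walk.length_cons] at hZlen; omega
  have hprne : ¬ p.reverse.Nil := by
    rw [Walk.not_nil_iff_lt_length, Walk.length_reverse]; omega
  obtain ⟨tv, h2, rr, hpr⟩ := Walk.not_nil_iff.mp hprne
  have hprev_path : p.reverse.IsPath := hp_path.reverse
  rw [hpr] at hprev_path
  have hrr_path : rr.IsPath := ((Walk.cons_isPath_iff _ _).mp hprev_path).1
  have hw_not_rr : Sum.inl w ∉ rr.support := ((Walk.cons_isPath_iff _ _).mp hprev_path).2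
  have hlenp : p.length = rr.length + 1 := by
    have h := congrArg Walk.length hpr
    rw [Walk.length_reverse, Walk.length_cons] at h
    exact h
  have hmem_p : ∀ v, v ∈ p.support ↔ v = Sum.inl w ∨ v ∈ rr.support := by
    intro v
    have h' : v ∈ p.support ↔ v ∈ p.reverse.support := by
      rw [Walk.support_reverse, List.mem_reverse]
    rw [h', hpr, Walk.support_cons, List.mem_cons]
  have hsupp : ∀ v, v ∈ (Walk.cons h1 p).support ↔ v = Sum.inl w ∨ v ∈ rr.support := by
    intro v
    rw [Walk.support_cons, List.mem_cons, hmem_p]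
    tauto
  have hedge_mem : ∀ e, e ∈ p.edges ↔ e = s(Sum.inl w, tv) ∨ e ∈ rr.edges := by
    intro e
    have h' : e ∈ p.edges ↔ e ∈ p.reverse.edges := by
      rw [Walk.edges_reverse, List.mem_reverse]
    rw [h', hpr, Walk.edges_cons, List.mem_cons]
  have hsv_mem : sv ∈ (Walk.cons h1 p).support := by
    rw [Walk.support_cons, List.mem_cons]
    exact Or.inr p.start_mem_support
  have hsv : sv = Sum.inr x ∨ sv = Sum.inr y :=
    (hZnbrs sv).mp (hZinduced _ _ (Walk.start_mem_support _) hsv_mem h1)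
  have htv_mem : tv ∈ (Walk.cons h1 p).support := (hsupp tv).mpr (Or.inr rr.start_mem_support)
  have htv : tv = Sum.inr x ∨ tv = Sum.inr y :=
    (hZnbrs tv).mp (hZinduced _ _ (Walk.start_mem_support _) htv_mem h2)
  have htvsv : tv ≠ sv := by
    rintro rfl
    have hnil := Walk.isPath_iff_eq_nil.mp hrr_path
    rw [hnil] at hlenp
    simp at hlenp
    omega
  have hedges : ∀ a b : Fin m ⊕ Fin n, s(a, b) ∈ (Walk.cons h1 p).edges →
      a ≠ Sum.inl w → b ≠ Sum.inl w → s(a, b) ∈ rr.edges := by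
    intro a b he ha hb
    rw [Walk.edges_cons, List.mem_cons] at he
    rcases he with he | he
    · exfalso
      rw [Sym2.eq_iff] at he
      rcases he with ⟨h, -⟩ | ⟨-, h⟩
      · exact ha h
      · exact hb h
    · rw [hedge_mem] at he
      rcases he with he | he
      · exfalso
        rw [Sym2.eq_iff] at he
        rcases he with ⟨h, -⟩ | ⟨-, h⟩
        · exact ha h
        · exact hb h
      · exact he
  have hZlen' : 6 ≤ (Walk.cons h1 p).length := hZlen
  rcases hsv with rfl | rfl
  · -- sv = inr x, so tv = inr y
    have htv' : tv = Sum.inr y := by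
      rcases htv with h | h
      · exact absurd h htvsv
      · exact h
    subst htv'
    refine tucker_core M w x y hxy _ hZlen' hZinduced hZnbrs rr.reverse hrr_path.reverse
      ?_ ?_ ?_ ?_
    · intro v
      rw [hsupp v, Walk.support_reverse, List.mem_reverse]
    · rw [Walk.support_reverse, List.mem_reverse]; exact hw_not_rr
    · rw [Walk.length_cons, Walk.length_reverse]; omega
    · intro a b he ha hb
      rw [Walk.edges_reverse, List.mem_reverse]
      exact hedges a b he ha hb
  · -- sv = inr y, so tv = inr x
    have htv' : tv = Sum.inr x := by
      rcases htv with h | h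
      · exact h
      · exact absurd h htvsv
    subst htv'
    refine tucker_core M w x y hxy _ hZlen' hZinduced hZnbrs rr hrr_path ?_ ?_ ?_ ?_
    · exact hsupp
    · exact hw_not_rr
    · rw [Walk.length_cons]; omega
    · exact hedges
end

section
/- In the setting of the graph G' from the cross-edges configuration: if exactly one of the pairs in E' = {{a,v},{a,w},{b,u},{b,w},{c,u},{c,v}} is an edge of G, then G' contains an induced subgraph isomorphic to G_{III_1}. (For instance, if the single edge is {b,u}, then the vertices d,u,a,x,b,y,w induce G_{III_1}, with u as the white vertex adjacent to the three black vertices d, a, b.) -/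
open SimpleGraph

/-- The cross-edges configuration: a bipartite graph `G` containing black vertices
`a,b,c,d` and white vertices `x,y,z,u,v,w` (all ten distinct), with the edges
`{x,a},{y,b},{z,c},{a,u},{b,v},{c,w},{u,d},{v,d},{w,d}` present, the pairs
`{x,b},{x,c},{x,d},{y,a},{y,c},{y,d},{z,a},{z,b},{z,d}` absent, and black vertices
(resp. white vertices) pairwise non-adjacent; the only undetermined pairs are those in
`E' = {{a,v},{a,w},{b,u},{b,w},{c,u},{c,v}}`. -/
structure CrossConfig {V : Type*} (G : SimpleGraph V) where
  a : V
  b : V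
  c : V
  d : V
  x : V
  y : V
  z : V
  u : V
  v : V
  w : V
  distinct : List.Pairwise (· ≠ ·) [a, b, c, d, x, y, z, u, v, w]
  blackIndep : ∀ p ∈ ({a, b, c, d} : Set V), ∀ q ∈ ({a, b, c, d} : Set V), ¬G.Adj p q
  whiteIndep : ∀ p ∈ ({x, y, z, u, v, w} : Set V), ∀ q ∈ ({x, y, z, u, v, w} : Set V),
    ¬G.Adj p q
  exa : G.Adj x a
  eyb : G.Adj y b
  ezc : G.Adj z c
  eau : G.Adj a u
  ebv : G.Adj b v
  ecw : G.Adj c w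
  eud : G.Adj u d
  evd : G.Adj v d
  ewd : G.Adj w d
  nxb : ¬G.Adj x b
  nxc : ¬G.Adj x c
  nxd : ¬G.Adj x d
  nya : ¬G.Adj y a
  nyc : ¬G.Adj y c
  nyd : ¬G.Adj y d
  nza : ¬G.Adj z a
  nzb : ¬G.Adj z b
  nzd : ¬G.Adj z d

/-- The set `E'` of the six undetermined pairs, as a finset of unordered pairs. -/
def crossE' {V : Type*} [DecidableEq V] {G : SimpleGraph V} (C : CrossConfig G) :
    Finset (Sym2 V) :=
  {s(C.a, C.v), s(C.a, C.w), s(C.b, C.u), s(C.b, C.w), s(C.c, C.u), s(C.c, C.v)}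


/-- Tucker's forbidden subgraph `G_III_1`: black vertices `p,q,r` (rows `0,1,2`) and
white vertices `p',q',r',t` (columns `0,1,2,3`), with edge set exactly
`{p,t},{q,t},{r,t},{p,p'},{q,q'},{r,r'}`. -/
def GIII1 : SimpleGraph (Fin 3 ⊕ Fin 4) :=
  graphOf (fun i j => (!![true,false,false,true;
                          false,true,false,true;
                          false,false,true,true] : Matrix (Fin 3) (Fin 4) Bool) i j)

instance GIII1.decAdj : DecidableRel GIII1.Adj := fun p q =>
  decidable_of_iff _ (SimpleGraph.fromRel_adj _ p q).symm

set_option synthInstance.maxSize 2000 in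
lemma GIII1_adj (p q : Fin 3 ⊕ Fin 4) : GIII1.Adj p q ↔
    ((p = .inl 0 ∧ q = .inr 0) ∨ (p = .inr 0 ∧ q = .inl 0) ∨
     (p = .inl 0 ∧ q = .inr 3) ∨ (p = .inr 3 ∧ q = .inl 0) ∨
     (p = .inl 1 ∧ q = .inr 1) ∨ (p = .inr 1 ∧ q = .inl 1) ∨
     (p = .inl 1 ∧ q = .inr 3) ∨ (p = .inr 3 ∧ q = .inl 1) ∨
     (p = .inl 2 ∧ q = .inr 2) ∨ (p = .inr 2 ∧ q = .inl 2) ∨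
     (p = .inl 2 ∧ q = .inr 3) ∨ (p = .inr 3 ∧ q = .inl 2)) := by
  revert p q; decide


set_option maxHeartbeats 1000000 in
lemma crossKey {V : Type*} [DecidableEq V] {G : SimpleGraph V} {d t a x b y w : V}
    (hdist : List.Pairwise (· ≠ ·) [d, t, a, x, b, y, w])
    (edt : G.Adj d t) (eat : G.Adj a t) (ebt : G.Adj b t)
    (edw : G.Adj d w) (eax : G.Adj a x) (eby : G.Adj b y)
    (nda : ¬G.Adj d a) (ndb : ¬G.Adj d b) (nab : ¬G.Adj a b)
    (ntx : ¬G.Adj t x) (nty : ¬G.Adj t y) (ntw : ¬G.Adj t w)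
    (nxy : ¬G.Adj x y) (nxw : ¬G.Adj x w) (nyw : ¬G.Adj y w)
    (ndx : ¬G.Adj d x) (ndy : ¬G.Adj d y) (nay : ¬G.Adj a y)
    (naw : ¬G.Adj a w) (nbx : ¬G.Adj b x) (nbw : ¬G.Adj b w) :
    ∃ f : (G.induce {d, t, a, x, b, y, w} : SimpleGraph _) ≃g GIII1,
      f ⟨t, by simp⟩ = Sum.inr 3 := by
  obtain ⟨⟨hdt, hda, hdx, hdb, hdy, hdw⟩, ⟨hta, htx, htb, hty, htw⟩,
    ⟨hax, hab, hay, haw⟩, ⟨hxb, hxy, hxw⟩, ⟨hby, hbw⟩, hyw⟩ :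
      (d ≠ t ∧ d ≠ a ∧ d ≠ x ∧ d ≠ b ∧ d ≠ y ∧ d ≠ w) ∧
      (t ≠ a ∧ t ≠ x ∧ t ≠ b ∧ t ≠ y ∧ t ≠ w) ∧
      (a ≠ x ∧ a ≠ b ∧ a ≠ y ∧ a ≠ w) ∧
      (x ≠ b ∧ x ≠ y ∧ x ≠ w) ∧ (b ≠ y ∧ b ≠ w) ∧ y ≠ w := by
    simpa using hdist
  have eat' := eat.symm
  have ebt' := ebt.symm
  have edt' := edt.symm
  have edw' := edw.symm
  have eax' := eax.symm
  have eby' := eby.symm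
  have nda' : ¬G.Adj a d := fun h => nda h.symm
  have ndb' : ¬G.Adj b d := fun h => ndb h.symm
  have nab' : ¬G.Adj b a := fun h => nab h.symm
  have ntx' : ¬G.Adj x t := fun h => ntx h.symm
  have nty' : ¬G.Adj y t := fun h => nty h.symm
  have ntw' : ¬G.Adj w t := fun h => ntw h.symm
  have nxy' : ¬G.Adj y x := fun h => nxy h.symm
  have nxw' : ¬G.Adj w x := fun h => nxw h.symm
  have nyw' : ¬G.Adj w y := fun h => nyw h.symm
  have ndx' : ¬G.Adj x d := fun h => ndx h.symm
  have ndy' : ¬G.Adj y d := fun h => ndy h.symm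
  have nay' : ¬G.Adj y a := fun h => nay h.symm
  have naw' : ¬G.Adj w a := fun h => naw h.symm
  have nbx' : ¬G.Adj x b := fun h => nbx h.symm
  have nbw' : ¬G.Adj w b := fun h => nbw h.symm
  refine ⟨⟨⟨fun p => if p.1 = d then .inl 0 else if p.1 = t then .inr 3 else
      if p.1 = a then .inl 1 else if p.1 = x then .inr 1 else
      if p.1 = b then .inl 2 else if p.1 = y then .inr 2 else .inr 0,
    Sum.elim ![⟨d, by simp⟩, ⟨a, by simp⟩, ⟨b, by simp⟩]
      ![⟨w, by simp⟩, ⟨x, by simp⟩, ⟨y, by simp⟩, ⟨t, by simp⟩], ?_, ?_⟩, ?_⟩, ?_⟩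
  · rintro ⟨p, hp⟩
    simp only [Set.mem_insert_iff, Set.mem_singleton_iff] at hp
    rcases hp with rfl | rfl | rfl | rfl | rfl | rfl | rfl <;>
      simp [hdt, hdt.symm, hda, hda.symm, hdx, hdx.symm, hdb, hdb.symm, hdy, hdy.symm, hdw, hdw.symm, hta, hta.symm, htx, htx.symm, htb, htb.symm, hty, hty.symm, htw, htw.symm, hax, hax.symm, hab, hab.symm, hay, hay.symm, haw, haw.symm, hxb, hxb.symm, hxy, hxy.symm, hxw, hxw.symm, hby, hby.symm, hbw, hbw.symm, hyw, hyw.symm]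
  · rintro (i | j) <;> [fin_cases i; fin_cases j] <;>
      simp [hdt, hdt.symm, hda, hda.symm, hdx, hdx.symm, hdb, hdb.symm, hdy, hdy.symm, hdw, hdw.symm, hta, hta.symm, htx, htx.symm, htb, htb.symm, hty, hty.symm, htw, htw.symm, hax, hax.symm, hab, hab.symm, hay, hay.symm, haw, haw.symm, hxb, hxb.symm, hxy, hxy.symm, hxw, hxw.symm, hby, hby.symm, hbw, hbw.symm, hyw, hyw.symm]
  · rintro ⟨p, hp⟩ ⟨q, hq⟩
    simp only [Set.mem_insert_iff, Set.mem_singleton_iff] at hp hq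
    rcases hp with rfl | rfl | rfl | rfl | rfl | rfl | rfl <;>
      rcases hq with rfl | rfl | rfl | rfl | rfl | rfl | rfl <;>
      simp [GIII1_adj, SimpleGraph.irrefl, hdt, hdt.symm, hda, hda.symm, hdx, hdx.symm, hdb, hdb.symm, hdy, hdy.symm, hdw, hdw.symm, hta, hta.symm, htx, htx.symm, htb, htb.symm, hty, hty.symm, htw, htw.symm, hax, hax.symm, hab, hab.symm, hay, hay.symm, haw, haw.symm, hxb, hxb.symm, hxy, hxy.symm, hxw, hxw.symm, hby, hby.symm, hbw, hbw.symm, hyw, hyw.symm,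
        edt, eat, ebt, edw, eax, eby, edt', eat', ebt', edw', eax', eby',
        nda, ndb, nab, ntx, nty, ntw, nxy, nxw, nyw, ndx, ndy, nay, naw, nbx, nbw,
        nda', ndb', nab', ntx', nty', ntw', nxy', nxw', nyw', ndx', ndy', nay', naw', nbx', nbw']
  · simp [hdt.symm, hta.symm]

set_option maxHeartbeats 4000000 in
/-- If exactly one of the pairs in `E' = {{a,v},{a,w},{b,u},{b,w},{c,u},{c,v}}` is an
edge of `G`, then the subgraph `G'` of `G` induced by the ten vertices contains an
induced subgraph isomorphic to `G_III_1`; for instance, if the single edge is `{b,u}`,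
then the vertices `d,u,a,x,b,y,w` induce `G_III_1`, with `u` as the white vertex
(column `3`) adjacent to the three black vertices `d,a,b`. -/
theorem crossConfig_one_edge_GIII1 {V : Type*} [DecidableEq V] {G : SimpleGraph V}
    (C : CrossConfig G)
    (h : ∃ e ∈ crossE' C, e ∈ G.edgeSet ∧ ∀ e' ∈ crossE' C, e' ∈ G.edgeSet → e' = e) :
    (∃ S : Set V, S ⊆ {C.a, C.b, C.c, C.d, C.x, C.y, C.z, C.u, C.v, C.w} ∧
      Nonempty ((G.induce S) ≃g GIII1)) ∧
    ((∀ e' ∈ crossE' C, e' ∈ G.edgeSet → e' = s(C.b, C.u)) →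
      ∃ f : (G.induce {C.d, C.u, C.a, C.x, C.b, C.y, C.w}) ≃g GIII1,
        f ⟨C.u, by simp⟩ = Sum.inr 3) := by
  obtain ⟨e, heE, heG, huniq⟩ := h
  obtain ⟨⟨hab, hac, had, hax, hay, haz, hau, hav, haw⟩,
    ⟨hbc, hbd, hbx, hby, hbz, hbu, hbv, hbw⟩, ⟨hcd, hcx, hcy, hcz, hcu, hcv, hcw⟩,
    ⟨hdx, hdy, hdz, hdu, hdv, hdw⟩, ⟨hxy, hxz, hxu, hxv, hxw⟩, ⟨hyz, hyu, hyv, hyw⟩,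
    ⟨hzu, hzv, hzw⟩, ⟨huv, huw⟩, hvw⟩ :
      (C.a ≠ C.b ∧ C.a ≠ C.c ∧ C.a ≠ C.d ∧ C.a ≠ C.x ∧ C.a ≠ C.y ∧ C.a ≠ C.z ∧
        C.a ≠ C.u ∧ C.a ≠ C.v ∧ C.a ≠ C.w) ∧
      (C.b ≠ C.c ∧ C.b ≠ C.d ∧ C.b ≠ C.x ∧ C.b ≠ C.y ∧ C.b ≠ C.z ∧ C.b ≠ C.u ∧
        C.b ≠ C.v ∧ C.b ≠ C.w) ∧
      (C.c ≠ C.d ∧ C.c ≠ C.x ∧ C.c ≠ C.y ∧ C.c ≠ C.z ∧ C.c ≠ C.u ∧ C.c ≠ C.v ∧ C.c ≠ C.w) ∧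
      (C.d ≠ C.x ∧ C.d ≠ C.y ∧ C.d ≠ C.z ∧ C.d ≠ C.u ∧ C.d ≠ C.v ∧ C.d ≠ C.w) ∧
      (C.x ≠ C.y ∧ C.x ≠ C.z ∧ C.x ≠ C.u ∧ C.x ≠ C.v ∧ C.x ≠ C.w) ∧
      (C.y ≠ C.z ∧ C.y ≠ C.u ∧ C.y ≠ C.v ∧ C.y ≠ C.w) ∧
      (C.z ≠ C.u ∧ C.z ≠ C.v ∧ C.z ≠ C.w) ∧ (C.u ≠ C.v ∧ C.u ≠ C.w) ∧ C.v ≠ C.w := by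
    simpa using C.distinct
  have notE : ∀ p q : V, s(p, q) ∈ crossE' C → s(p, q) ≠ e → ¬G.Adj p q :=
    fun p q hm hne hadj => hne (huniq _ hm (G.mem_edgeSet.mpr hadj))
  have hcases : e = s(C.a, C.v) ∨ e = s(C.a, C.w) ∨ e = s(C.b, C.u) ∨
      e = s(C.b, C.w) ∨ e = s(C.c, C.u) ∨ e = s(C.c, C.v) := by
    simpa [crossE'] using heE
  rcases hcases with rfl | rfl | rfl | rfl | rfl | rfl
  · -- case e = s(C.a, C.v)
    have hadj : G.Adj C.a C.v := G.mem_edgeSet.mp heG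
    have naw : ¬G.Adj C.b C.w := notE _ _ (by simp [crossE']) (by rw [Ne, Sym2.eq_iff]; rintro (⟨h1, h2⟩ | ⟨h1, h2⟩); exacts [hab.symm h1, hbv h1])
    have nbw : ¬G.Adj C.a C.w := notE _ _ (by simp [crossE']) (by rw [Ne, Sym2.eq_iff]; rintro (⟨h1, h2⟩ | ⟨h1, h2⟩); exacts [hvw.symm h2, hav h1])
    have hpw : List.Pairwise (· ≠ ·) [C.d, C.v, C.b, C.y, C.a, C.x, C.w] := by
      simp only [List.pairwise_cons, List.mem_cons, List.mem_singleton,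
        List.not_mem_nil, or_false, List.Pairwise.nil, and_true, forall_eq_or_imp,
        forall_eq, false_implies, implies_true, and_true]
      and_intros <;> first | assumption | exact Ne.symm (by assumption) | trivial
    obtain ⟨f, hf⟩ := crossKey hpw C.evd.symm C.ebv hadj C.ewd.symm C.eyb.symm C.exa.symm
      (C.blackIndep _ (by simp) _ (by simp)) (C.blackIndep _ (by simp) _ (by simp))
      (C.blackIndep _ (by simp) _ (by simp)) (C.whiteIndep _ (by simp) _ (by simp))
      (C.whiteIndep _ (by simp) _ (by simp)) (C.whiteIndep _ (by simp) _ (by simp))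
      (C.whiteIndep _ (by simp) _ (by simp)) (C.whiteIndep _ (by simp) _ (by simp))
      (C.whiteIndep _ (by simp) _ (by simp)) (fun h => C.nyd h.symm) (fun h => C.nxd h.symm) (fun h => C.nxb h.symm) naw (fun h => C.nya h.symm) nbw
    refine ⟨⟨_, fun s hs => ?_, ⟨f⟩⟩, ?_⟩
    · simp only [Set.mem_insert_iff, Set.mem_singleton_iff] at hs ⊢
      rcases hs with rfl | rfl | rfl | rfl | rfl | rfl | rfl <;> simp
    · intro h2
      have h3 := h2 _ (by simp [crossE']) heG
      rw [Sym2.eq_iff] at h3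
      rcases h3 with ⟨h4, h5⟩ | ⟨h4, h5⟩
      exacts [absurd h4 (hab), absurd h4 (hau)]
  · -- case e = s(C.a, C.w)
    have hadj : G.Adj C.a C.w := G.mem_edgeSet.mp heG
    have naw : ¬G.Adj C.c C.v := notE _ _ (by simp [crossE']) (by rw [Ne, Sym2.eq_iff]; rintro (⟨h1, h2⟩ | ⟨h1, h2⟩); exacts [hac.symm h1, hcw h1])
    have nbw : ¬G.Adj C.a C.v := notE _ _ (by simp [crossE']) (by rw [Ne, Sym2.eq_iff]; rintro (⟨h1, h2⟩ | ⟨h1, h2⟩); exacts [hvw h2, haw h1])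
    have hpw : List.Pairwise (· ≠ ·) [C.d, C.w, C.c, C.z, C.a, C.x, C.v] := by
      simp only [List.pairwise_cons, List.mem_cons, List.mem_singleton,
        List.not_mem_nil, or_false, List.Pairwise.nil, and_true, forall_eq_or_imp,
        forall_eq, false_implies, implies_true, and_true]
      and_intros <;> first | assumption | exact Ne.symm (by assumption) | trivial
    obtain ⟨f, hf⟩ := crossKey hpw C.ewd.symm C.ecw hadj C.evd.symm C.ezc.symm C.exa.symm
      (C.blackIndep _ (by simp) _ (by simp)) (C.blackIndep _ (by simp) _ (by simp))
      (C.blackIndep _ (by simp) _ (by simp)) (C.whiteIndep _ (by simp) _ (by simp))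
      (C.whiteIndep _ (by simp) _ (by simp)) (C.whiteIndep _ (by simp) _ (by simp))
      (C.whiteIndep _ (by simp) _ (by simp)) (C.whiteIndep _ (by simp) _ (by simp))
      (C.whiteIndep _ (by simp) _ (by simp)) (fun h => C.nzd h.symm) (fun h => C.nxd h.symm) (fun h => C.nxc h.symm) naw (fun h => C.nza h.symm) nbw
    refine ⟨⟨_, fun s hs => ?_, ⟨f⟩⟩, ?_⟩
    · simp only [Set.mem_insert_iff, Set.mem_singleton_iff] at hs ⊢
      rcases hs with rfl | rfl | rfl | rfl | rfl | rfl | rfl <;> simp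
    · intro h2
      have h3 := h2 _ (by simp [crossE']) heG
      rw [Sym2.eq_iff] at h3
      rcases h3 with ⟨h4, h5⟩ | ⟨h4, h5⟩
      exacts [absurd h4 (hab), absurd h4 (hau)]
  · -- case e = s(C.b, C.u)
    have hadj : G.Adj C.b C.u := G.mem_edgeSet.mp heG
    have naw : ¬G.Adj C.a C.w := notE _ _ (by simp [crossE']) (by rw [Ne, Sym2.eq_iff]; rintro (⟨h1, h2⟩ | ⟨h1, h2⟩); exacts [hab h1, hau h1])
    have nbw : ¬G.Adj C.b C.w := notE _ _ (by simp [crossE']) (by rw [Ne, Sym2.eq_iff]; rintro (⟨h1, h2⟩ | ⟨h1, h2⟩); exacts [huw.symm h2, hbu h1])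
    have hpw : List.Pairwise (· ≠ ·) [C.d, C.u, C.a, C.x, C.b, C.y, C.w] := by
      simp only [List.pairwise_cons, List.mem_cons, List.mem_singleton,
        List.not_mem_nil, or_false, List.Pairwise.nil, and_true, forall_eq_or_imp,
        forall_eq, false_implies, implies_true, and_true]
      and_intros <;> first | assumption | exact Ne.symm (by assumption) | trivial
    obtain ⟨f, hf⟩ := crossKey hpw C.eud.symm C.eau hadj C.ewd.symm C.exa.symm C.eyb.symm
      (C.blackIndep _ (by simp) _ (by simp)) (C.blackIndep _ (by simp) _ (by simp))
      (C.blackIndep _ (by simp) _ (by simp)) (C.whiteIndep _ (by simp) _ (by simp))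
      (C.whiteIndep _ (by simp) _ (by simp)) (C.whiteIndep _ (by simp) _ (by simp))
      (C.whiteIndep _ (by simp) _ (by simp)) (C.whiteIndep _ (by simp) _ (by simp))
      (C.whiteIndep _ (by simp) _ (by simp)) (fun h => C.nxd h.symm) (fun h => C.nyd h.symm) (fun h => C.nya h.symm) naw (fun h => C.nxb h.symm) nbw
    refine ⟨⟨_, fun s hs => ?_, ⟨f⟩⟩, ?_⟩
    · simp only [Set.mem_insert_iff, Set.mem_singleton_iff] at hs ⊢
      rcases hs with rfl | rfl | rfl | rfl | rfl | rfl | rfl <;> simp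
    · intro _; exact ⟨f, hf⟩
  · -- case e = s(C.b, C.w)
    have hadj : G.Adj C.b C.w := G.mem_edgeSet.mp heG
    have naw : ¬G.Adj C.c C.u := notE _ _ (by simp [crossE']) (by rw [Ne, Sym2.eq_iff]; rintro (⟨h1, h2⟩ | ⟨h1, h2⟩); exacts [hbc.symm h1, hcw h1])
    have nbw : ¬G.Adj C.b C.u := notE _ _ (by simp [crossE']) (by rw [Ne, Sym2.eq_iff]; rintro (⟨h1, h2⟩ | ⟨h1, h2⟩); exacts [huw h2, hbw h1])
    have hpw : List.Pairwise (· ≠ ·) [C.d, C.w, C.c, C.z, C.b, C.y, C.u] := by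
      simp only [List.pairwise_cons, List.mem_cons, List.mem_singleton,
        List.not_mem_nil, or_false, List.Pairwise.nil, and_true, forall_eq_or_imp,
        forall_eq, false_implies, implies_true, and_true]
      and_intros <;> first | assumption | exact Ne.symm (by assumption) | trivial
    obtain ⟨f, hf⟩ := crossKey hpw C.ewd.symm C.ecw hadj C.eud.symm C.ezc.symm C.eyb.symm
      (C.blackIndep _ (by simp) _ (by simp)) (C.blackIndep _ (by simp) _ (by simp))
      (C.blackIndep _ (by simp) _ (by simp)) (C.whiteIndep _ (by simp) _ (by simp))
      (C.whiteIndep _ (by simp) _ (by simp)) (C.whiteIndep _ (by simp) _ (by simp))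
      (C.whiteIndep _ (by simp) _ (by simp)) (C.whiteIndep _ (by simp) _ (by simp))
      (C.whiteIndep _ (by simp) _ (by simp)) (fun h => C.nzd h.symm) (fun h => C.nyd h.symm) (fun h => C.nyc h.symm) naw (fun h => C.nzb h.symm) nbw
    refine ⟨⟨_, fun s hs => ?_, ⟨f⟩⟩, ?_⟩
    · simp only [Set.mem_insert_iff, Set.mem_singleton_iff] at hs ⊢
      rcases hs with rfl | rfl | rfl | rfl | rfl | rfl | rfl <;> simp
    · intro h2
      have h3 := h2 _ (by simp [crossE']) heG
      rw [Sym2.eq_iff] at h3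
      rcases h3 with ⟨h4, h5⟩ | ⟨h4, h5⟩
      exacts [absurd h5 (huw.symm), absurd h4 (hbu)]
  · -- case e = s(C.c, C.u)
    have hadj : G.Adj C.c C.u := G.mem_edgeSet.mp heG
    have naw : ¬G.Adj C.a C.v := notE _ _ (by simp [crossE']) (by rw [Ne, Sym2.eq_iff]; rintro (⟨h1, h2⟩ | ⟨h1, h2⟩); exacts [hac h1, hau h1])
    have nbw : ¬G.Adj C.c C.v := notE _ _ (by simp [crossE']) (by rw [Ne, Sym2.eq_iff]; rintro (⟨h1, h2⟩ | ⟨h1, h2⟩); exacts [huv.symm h2, hcu h1])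
    have hpw : List.Pairwise (· ≠ ·) [C.d, C.u, C.a, C.x, C.c, C.z, C.v] := by
      simp only [List.pairwise_cons, List.mem_cons, List.mem_singleton,
        List.not_mem_nil, or_false, List.Pairwise.nil, and_true, forall_eq_or_imp,
        forall_eq, false_implies, implies_true, and_true]
      and_intros <;> first | assumption | exact Ne.symm (by assumption) | trivial
    obtain ⟨f, hf⟩ := crossKey hpw C.eud.symm C.eau hadj C.evd.symm C.exa.symm C.ezc.symm
      (C.blackIndep _ (by simp) _ (by simp)) (C.blackIndep _ (by simp) _ (by simp))
      (C.blackIndep _ (by simp) _ (by simp)) (C.whiteIndep _ (by simp) _ (by simp))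
      (C.whiteIndep _ (by simp) _ (by simp)) (C.whiteIndep _ (by simp) _ (by simp))
      (C.whiteIndep _ (by simp) _ (by simp)) (C.whiteIndep _ (by simp) _ (by simp))
      (C.whiteIndep _ (by simp) _ (by simp)) (fun h => C.nxd h.symm) (fun h => C.nzd h.symm) (fun h => C.nza h.symm) naw (fun h => C.nxc h.symm) nbw
    refine ⟨⟨_, fun s hs => ?_, ⟨f⟩⟩, ?_⟩
    · simp only [Set.mem_insert_iff, Set.mem_singleton_iff] at hs ⊢
      rcases hs with rfl | rfl | rfl | rfl | rfl | rfl | rfl <;> simp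
    · intro h2
      have h3 := h2 _ (by simp [crossE']) heG
      rw [Sym2.eq_iff] at h3
      rcases h3 with ⟨h4, h5⟩ | ⟨h4, h5⟩
      exacts [absurd h4 (hbc.symm), absurd h4 (hcu)]
  · -- case e = s(C.c, C.v)
    have hadj : G.Adj C.c C.v := G.mem_edgeSet.mp heG
    have naw : ¬G.Adj C.b C.u := notE _ _ (by simp [crossE']) (by rw [Ne, Sym2.eq_iff]; rintro (⟨h1, h2⟩ | ⟨h1, h2⟩); exacts [hbc h1, hbv h1])
    have nbw : ¬G.Adj C.c C.u := notE _ _ (by simp [crossE']) (by rw [Ne, Sym2.eq_iff]; rintro (⟨h1, h2⟩ | ⟨h1, h2⟩); exacts [huv h2, hcv h1])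
    have hpw : List.Pairwise (· ≠ ·) [C.d, C.v, C.b, C.y, C.c, C.z, C.u] := by
      simp only [List.pairwise_cons, List.mem_cons, List.mem_singleton,
        List.not_mem_nil, or_false, List.Pairwise.nil, and_true, forall_eq_or_imp,
        forall_eq, false_implies, implies_true, and_true]
      and_intros <;> first | assumption | exact Ne.symm (by assumption) | trivial
    obtain ⟨f, hf⟩ := crossKey hpw C.evd.symm C.ebv hadj C.eud.symm C.eyb.symm C.ezc.symm
      (C.blackIndep _ (by simp) _ (by simp)) (C.blackIndep _ (by simp) _ (by simp))
      (C.blackIndep _ (by simp) _ (by simp)) (C.whiteIndep _ (by simp) _ (by simp))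
      (C.whiteIndep _ (by simp) _ (by simp)) (C.whiteIndep _ (by simp) _ (by simp))
      (C.whiteIndep _ (by simp) _ (by simp)) (C.whiteIndep _ (by simp) _ (by simp))
      (C.whiteIndep _ (by simp) _ (by simp)) (fun h => C.nyd h.symm) (fun h => C.nzd h.symm) (fun h => C.nzb h.symm) naw (fun h => C.nyc h.symm) nbw
    refine ⟨⟨_, fun s hs => ?_, ⟨f⟩⟩, ?_⟩
    · simp only [Set.mem_insert_iff, Set.mem_singleton_iff] at hs ⊢
      rcases hs with rfl | rfl | rfl | rfl | rfl | rfl | rfl <;> simp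
    · intro h2
      have h3 := h2 _ (by simp [crossE']) heG
      rw [Sym2.eq_iff] at h3
      rcases h3 with ⟨h4, h5⟩ | ⟨h4, h5⟩
      exacts [absurd h4 (hbc.symm), absurd h4 (hcu)]
end

section
/- In the setting of the graph G' from the cross-edges configuration: if two edges of E' = {{a,v},{a,w},{b,u},{b,w},{c,u},{c,v}} sharing a common white vertex s ∈ {u,v,w} are present in G (i.e., both {b,u} and {c,u}, or both {a,v} and {c,v}, or both {a,w} and {b,w}), then the vertices x,y,z,a,b,c together with s induce a subgraph isomorphic to G_{III_1}, with s as the white vertex adjacent to all of a, b, c. -/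
open SimpleGraph

private def adjB : Fin 3 ⊕ Fin 4 → Fin 3 ⊕ Fin 4 → Bool
  | .inl i, .inr j => (!![true,false,false,true;
                          false,true,false,true;
                          false,false,true,true] : Matrix (Fin 3) (Fin 4) Bool) i j
  | .inr j, .inl i => (!![true,false,false,true;
                          false,true,false,true;
                          false,false,true,true] : Matrix (Fin 3) (Fin 4) Bool) i j
  | _, _ => false

private lemma GIII1_adj_iff : ∀ p q, GIII1.Adj p q ↔ adjB p q = true := by
  simp only [GIII1, graphOf, SimpleGraph.fromRel_adj]
  intro p q
  rcases p with i|i <;> rcases q with j|j <;> fin_cases i <;> fin_cases j <;> simp [adjB]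

set_option maxHeartbeats 2000000 in
/-- If two pairs of `E'` sharing a common white vertex `s ∈ {u,v,w}` are both edges of
`G` (i.e. both `{b,u}` and `{c,u}`, or both `{a,v}` and `{c,v}`, or both `{a,w}` and
`{b,w}`), then the vertices `x,y,z,a,b,c` together with `s` induce a subgraph
isomorphic to `G_III_1`, with `s` as the white vertex (column `3`) adjacent to all of
`a,b,c`. -/
theorem crossConfig_joined_right_GIII1 {V : Type*} {G : SimpleGraph V}
    (C : CrossConfig G) (s : V)
    (h : (s = C.u ∧ G.Adj C.b C.u ∧ G.Adj C.c C.u) ∨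
         (s = C.v ∧ G.Adj C.a C.v ∧ G.Adj C.c C.v) ∨
         (s = C.w ∧ G.Adj C.a C.w ∧ G.Adj C.b C.w)) :
    ∃ f : (G.induce {C.x, C.y, C.z, C.a, C.b, C.c, s}) ≃g GIII1,
      f ⟨s, by simp⟩ = Sum.inr 3 := by
  letI : DecidableEq V := Classical.decEq V
  have dist := C.distinct
  simp only [List.pairwise_cons, List.mem_cons, List.not_mem_nil, List.mem_singleton,
    forall_eq_or_imp, forall_eq, List.Pairwise.nil, and_true, ne_eq, or_false] at dist
  obtain ⟨⟨ab,ac,ad,ax,ay,az,au,av,aw⟩,⟨bc,bd,bx,byy,bz,bu,bv,bw⟩,⟨cd,cx,cy,cz,cu,cv,cw⟩,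
    ⟨dx,dy,dz,du,dv,dw⟩,⟨xy,xz,xu,xv,xw⟩,⟨yz,yu,yv,yw⟩,⟨zu,zv,zw⟩,⟨uv,uw⟩,vw⟩ := dist
  obtain ⟨has, hbs, hcs, hsW, sa, sb, sc, sx, sy, sz⟩ :
      G.Adj C.a s ∧ G.Adj C.b s ∧ G.Adj C.c s ∧ s ∈ ({C.x,C.y,C.z,C.u,C.v,C.w} : Set V) ∧
      s ≠ C.a ∧ s ≠ C.b ∧ s ≠ C.c ∧ s ≠ C.x ∧ s ≠ C.y ∧ s ≠ C.z := by
    rcases h with ⟨rfl,h1,h2⟩|⟨rfl,h1,h2⟩|⟨rfl,h1,h2⟩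
    · exact ⟨C.eau, h1, h2, by simp, Ne.symm au, Ne.symm bu, Ne.symm cu,
        Ne.symm xu, Ne.symm yu, Ne.symm zu⟩
    · exact ⟨h1, C.ebv, h2, by simp, Ne.symm av, Ne.symm bv, Ne.symm cv,
        Ne.symm xv, Ne.symm yv, Ne.symm zv⟩
    · exact ⟨h1, h2, C.ecw, by simp, Ne.symm aw, Ne.symm bw, Ne.symm cw,
        Ne.symm xw, Ne.symm yw, Ne.symm zw⟩
  have exa := C.exa
  have eyb := C.eyb
  have ezc := C.ezc
  have nxb := C.nxb
  have nxc := C.nxc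
  have nya := C.nya
  have nyc := C.nyc
  have nza := C.nza
  have nzb := C.nzb
  have nxy : ¬G.Adj C.x C.y := C.whiteIndep _ (by simp) _ (by simp)
  have nxz : ¬G.Adj C.x C.z := C.whiteIndep _ (by simp) _ (by simp)
  have nyz : ¬G.Adj C.y C.z := C.whiteIndep _ (by simp) _ (by simp)
  have nxs : ¬G.Adj C.x s := C.whiteIndep _ (by simp) s hsW
  have nys : ¬G.Adj C.y s := C.whiteIndep _ (by simp) s hsW
  have nzs : ¬G.Adj C.z s := C.whiteIndep _ (by simp) s hsW
  have nab : ¬G.Adj C.a C.b := C.blackIndep _ (by simp) _ (by simp)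
  have nac : ¬G.Adj C.a C.c := C.blackIndep _ (by simp) _ (by simp)
  have nbc : ¬G.Adj C.b C.c := C.blackIndep _ (by simp) _ (by simp)
  have exa' := exa.symm; have eyb' := eyb.symm; have ezc' := ezc.symm
  have has' := has.symm; have hbs' := hbs.symm; have hcs' := hcs.symm
  have nxy' : ¬G.Adj C.y C.x := fun h' => nxy h'.symm
  have nxz' : ¬G.Adj C.z C.x := fun h' => nxz h'.symm
  have nyz' : ¬G.Adj C.z C.y := fun h' => nyz h'.symm
  have nxs' : ¬G.Adj s C.x := fun h' => nxs h'.symm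
  have nys' : ¬G.Adj s C.y := fun h' => nys h'.symm
  have nzs' : ¬G.Adj s C.z := fun h' => nzs h'.symm
  have nab' : ¬G.Adj C.b C.a := fun h' => nab h'.symm
  have nac' : ¬G.Adj C.c C.a := fun h' => nac h'.symm
  have nbc' : ¬G.Adj C.c C.b := fun h' => nbc h'.symm
  have nxb' : ¬G.Adj C.b C.x := fun h' => nxb h'.symm
  have nxc' : ¬G.Adj C.c C.x := fun h' => nxc h'.symm
  have nya' : ¬G.Adj C.a C.y := fun h' => nya h'.symm
  have nyc' : ¬G.Adj C.c C.y := fun h' => nyc h'.symm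
  have nza' : ¬G.Adj C.a C.z := fun h' => nza h'.symm
  have nzb' : ¬G.Adj C.b C.z := fun h' => nzb h'.symm
  let F : V → Fin 3 ⊕ Fin 4 := fun p =>
    if p = C.a then .inl 0 else if p = C.b then .inl 1 else if p = C.c then .inl 2 else
    if p = C.x then .inr 0 else if p = C.y then .inr 1 else if p = C.z then .inr 2 else .inr 3
  have hFa : F C.a = .inl 0 := by simp [F]
  have hFb : F C.b = .inl 1 := by simp [F, Ne.symm ab]
  have hFc : F C.c = .inl 2 := by simp [F, Ne.symm ac, Ne.symm bc]
  have hFx : F C.x = .inr 0 := by simp [F, Ne.symm ax, Ne.symm bx, Ne.symm cx]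
  have hFy : F C.y = .inr 1 := by simp [F, Ne.symm ay, Ne.symm byy, Ne.symm cy, Ne.symm xy]
  have hFz : F C.z = .inr 2 := by
    simp [F, Ne.symm az, Ne.symm bz, Ne.symm cz, Ne.symm xz, Ne.symm yz]
  have hFs : F s = .inr 3 := by simp [F, sa, sb, sc, sx, sy, sz]
  refine ⟨⟨⟨fun p => F p.1,
    Sum.elim (![⟨C.a, by simp⟩, ⟨C.b, by simp⟩, ⟨C.c, by simp⟩])
             (![⟨C.x, by simp⟩, ⟨C.y, by simp⟩, ⟨C.z, by simp⟩, ⟨s, by simp⟩]),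
    ?_, ?_⟩, ?_⟩, ?_⟩
  · rintro ⟨p, hp⟩
    simp only [Set.mem_insert_iff, Set.mem_singleton_iff] at hp
    obtain rfl|rfl|rfl|rfl|rfl|rfl|rfl := hp <;>
      simp only [hFa, hFb, hFc, hFx, hFy, hFz, hFs] <;> rfl
  · rintro (i|i) <;> fin_cases i
    · exact hFa
    · exact hFb
    · exact hFc
    · exact hFx
    · exact hFy
    · exact hFz
    · exact hFs
  · intro p q
    obtain ⟨p, hp⟩ := p; obtain ⟨q, hq⟩ := q
    simp only [Set.mem_insert_iff, Set.mem_singleton_iff] at hp hq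
    show GIII1.Adj (F p) (F q) ↔ G.Adj p q
    obtain rfl|rfl|rfl|rfl|rfl|rfl|rfl := hp <;> obtain rfl|rfl|rfl|rfl|rfl|rfl|rfl := hq <;>
      simp only [hFa, hFb, hFc, hFx, hFy, hFz, hFs] <;>
      first
        | exact iff_of_false (fun hh => absurd ((GIII1_adj_iff _ _).mp hh) (by decide)) G.irrefl
        | exact iff_of_true ((GIII1_adj_iff _ _).mpr (by decide)) (by assumption)
        | exact iff_of_false (fun hh => absurd ((GIII1_adj_iff _ _).mp hh) (by decide)) (by assumption)
  · exact hFs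
end

section
/- In the setting of the graph G' from the cross-edges configuration: if the set of pairs of E' = {{a,v},{a,w},{b,u},{b,w},{c,u},{c,v}} that are edges of G is exactly {{a,v},{b,w},{c,u}} or exactly {{a,w},{b,u},{c,v}} (three pairwise vertex-disjoint edges), then the six vertices a,b,c,u,v,w induce a chordless cycle of length 6. -/
open SimpleGraph

/-- The chordless cycle of length `6`, as the bipartite graph of the `3 × 3` circulant
matrix with ones in positions `(i, i)` and `(i, i+1)`. -/
def C6 : SimpleGraph (Fin 3 ⊕ Fin 3) :=
  graphOf (fun i j : Fin 3 => decide (j = i ∨ j = i + 1))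

lemma c6_ll : ∀ i j : Fin 3, ¬ C6.Adj (Sum.inl i) (Sum.inl j) := by
  simp only [C6, graphOf, fromRel_adj]; decide
lemma c6_rr : ∀ i j : Fin 3, ¬ C6.Adj (Sum.inr i) (Sum.inr j) := by
  simp only [C6, graphOf, fromRel_adj]; decide
lemma c6_lr : ∀ i j : Fin 3, C6.Adj (Sum.inl i) (Sum.inr j) ↔ (j = i ∨ j = i + 1) := by
  simp only [C6, graphOf, fromRel_adj]; decide
lemma c6_rl : ∀ i j : Fin 3, C6.Adj (Sum.inr j) (Sum.inl i) ↔ (j = i ∨ j = i + 1) := by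
  simp only [C6, graphOf, fromRel_adj]; decide

lemma sixCycle {V : Type*} {G : SimpleGraph V} (A B : Fin 3 → V) (S : Set V)
    (hS : ∀ x, x ∈ S ↔ (∃ i, x = A i) ∨ (∃ i, x = B i))
    (hAB : ∀ i j, A i ≠ B j)
    (hA : Function.Injective A)
    (hB : Function.Injective B)
    (hadj : ∀ i j, G.Adj (A i) (B j) ↔ (j = i ∨ j = i + 1))
    (hAi : ∀ i j, ¬ G.Adj (A i) (A j))
    (hBi : ∀ i j, ¬ G.Adj (B i) (B j)) :
    Nonempty (G.induce S ≃g C6) := by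
  have memA : ∀ i, A i ∈ S := fun i => (hS _).2 (Or.inl ⟨i, rfl⟩)
  have memB : ∀ i, B i ∈ S := fun i => (hS _).2 (Or.inr ⟨i, rfl⟩)
  let f : Fin 3 ⊕ Fin 3 → S := Sum.elim (fun i => ⟨A i, memA i⟩) (fun i => ⟨B i, memB i⟩)
  have hbij : Function.Bijective f := by
    constructor
    · rintro (i|i) (j|j) hf <;>
        simp only [f, Sum.elim_inl, Sum.elim_inr, Subtype.mk.injEq] at hf
      · exact congrArg _ (hA hf)
      · exact absurd hf (hAB i j)
      · exact absurd hf.symm (hAB j i)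
      · exact congrArg _ (hB hf)
    · rintro ⟨x, hx⟩
      rcases (hS x).1 hx with ⟨i, rfl⟩ | ⟨i, rfl⟩
      exacts [⟨.inl i, rfl⟩, ⟨.inr i, rfl⟩]
  let e := Equiv.ofBijective f hbij
  refine ⟨RelIso.symm (⟨e, ?_⟩ : C6 ≃g G.induce S)⟩
  intro p q
  obtain (i|i) := p <;> obtain (j|j) := q
  · exact iff_of_false (hAi i j) (c6_ll i j)
  · exact (hadj i j).trans (c6_lr i j).symm
  · exact ((G.adj_comm (B i) (A j)).trans (hadj j i)).trans (c6_rl j i).symm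
  · exact iff_of_false (hBi i j) (c6_rr i j)


/-- If the set of pairs of `E' = {{a,v},{a,w},{b,u},{b,w},{c,u},{c,v}}` that are edges
of `G` is exactly `{{a,v},{b,w},{c,u}}` or exactly `{{a,w},{b,u},{c,v}}` (three
pairwise vertex-disjoint edges), then the six vertices `a,b,c,u,v,w` induce a
chordless cycle of length `6`. -/
theorem crossConfig_three_disjoint_edges_C6 {V : Type*} {G : SimpleGraph V}
    (C : CrossConfig G)
    (h : (G.Adj C.a C.v ∧ G.Adj C.b C.w ∧ G.Adj C.c C.u ∧
          ¬G.Adj C.a C.w ∧ ¬G.Adj C.b C.u ∧ ¬G.Adj C.c C.v) ∨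
         (G.Adj C.a C.w ∧ G.Adj C.b C.u ∧ G.Adj C.c C.v ∧
          ¬G.Adj C.a C.v ∧ ¬G.Adj C.b C.w ∧ ¬G.Adj C.c C.u)) :
    Nonempty ((G.induce {C.a, C.b, C.c, C.u, C.v, C.w}) ≃g C6) := by
  obtain ⟨a, b, c, d, x, y, z, u, v, w, dist, bI, wI, exa, eyb, ezc, eau, ebv, ecw,
    eud, evd, ewd, nxb, nxc, nxd, nya, nyc, nyd, nza, nzb, nzd⟩ := C
  simp only at h ⊢
  simp only [List.pairwise_cons, List.mem_cons, List.not_mem_nil, or_false,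
    forall_eq_or_imp, forall_eq] at dist
  obtain ⟨⟨hab, hac, -, -, -, -, hau, hav, haw⟩, ⟨hbc, -, -, -, -, hbu, hbv, hbw⟩,
    ⟨-, -, -, -, hcu, hcv, hcw⟩, -, -, -, -, ⟨huv, huw⟩, hvw, -⟩ := dist
  have hAi3 : ∀ (A : Fin 3 → V), (∀ i, A i ∈ ({a, b, c, d} : Set V)) →
      ∀ i j, ¬ G.Adj (A i) (A j) := fun A hm i j => bI _ (hm i) _ (hm j)
  have hBi3 : ∀ (B : Fin 3 → V), (∀ i, B i ∈ ({x, y, z, u, v, w} : Set V)) →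
      ∀ i j, ¬ G.Adj (B i) (B j) := fun B hm i j => wI _ (hm i) _ (hm j)
  rcases h with ⟨eav, ebw, ecu, naw, nbu, ncv⟩ | ⟨eaw, ebu, ecv, nav, nbw, ncu⟩
  · -- cycle a-v-b-w-c-u-a? edges: a-u,b-v,c-w,a-v,b-w,c-u; take A = ![a,c,b], B = ![v,u,w]
    apply sixCycle ![a, c, b] ![v, u, w]
    · intro t
      simp only [Set.mem_insert_iff, Set.mem_singleton_iff]
      constructor
      · rintro (rfl|rfl|rfl|rfl|rfl|rfl)
        exacts [Or.inl ⟨0, rfl⟩, Or.inl ⟨2, rfl⟩, Or.inl ⟨1, rfl⟩,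
          Or.inr ⟨1, rfl⟩, Or.inr ⟨0, rfl⟩, Or.inr ⟨2, rfl⟩]
      · rintro (⟨i, rfl⟩|⟨i, rfl⟩) <;> fin_cases i <;> simp
    · intro i j; fin_cases i <;> fin_cases j <;>
        first
        | exact hav | exact hau | exact haw
        | exact hbv | exact hbu | exact hbw
        | exact hcv | exact hcu | exact hcw
    · intro i j hf; fin_cases i <;> fin_cases j <;>
        first
        | rfl
        | exact absurd hf hab | exact absurd hf hab.symm
        | exact absurd hf hac | exact absurd hf hac.symm
        | exact absurd hf hbc | exact absurd hf hbc.symm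
        | exact absurd hf huv | exact absurd hf huv.symm
        | exact absurd hf huw | exact absurd hf huw.symm
        | exact absurd hf hvw | exact absurd hf hvw.symm
    · intro i j hf; fin_cases i <;> fin_cases j <;>
        first
        | rfl
        | exact absurd hf hab | exact absurd hf hab.symm
        | exact absurd hf hac | exact absurd hf hac.symm
        | exact absurd hf hbc | exact absurd hf hbc.symm
        | exact absurd hf huv | exact absurd hf huv.symm
        | exact absurd hf huw | exact absurd hf huw.symm
        | exact absurd hf hvw | exact absurd hf hvw.symm
    · intro i j; fin_cases i <;> fin_cases j <;>
        first
        | exact iff_of_true (by assumption) (by decide)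
        | exact iff_of_false (by assumption) (by decide)
    · exact hAi3 _ (by intro i; fin_cases i <;> simp)
    · exact hBi3 _ (by intro i; fin_cases i <;> simp)
  · -- edges: a-u,a-w,b-u,b-v,c-v,c-w; A = ![a,b,c], B = ![w,u,v]
    apply sixCycle ![a, b, c] ![w, u, v]
    · intro t
      simp only [Set.mem_insert_iff, Set.mem_singleton_iff]
      constructor
      · rintro (rfl|rfl|rfl|rfl|rfl|rfl)
        exacts [Or.inl ⟨0, rfl⟩, Or.inl ⟨1, rfl⟩, Or.inl ⟨2, rfl⟩,
          Or.inr ⟨1, rfl⟩, Or.inr ⟨2, rfl⟩, Or.inr ⟨0, rfl⟩]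
      · rintro (⟨i, rfl⟩|⟨i, rfl⟩) <;> fin_cases i <;> simp
    · intro i j; fin_cases i <;> fin_cases j <;>
        first
        | exact hav | exact hau | exact haw
        | exact hbv | exact hbu | exact hbw
        | exact hcv | exact hcu | exact hcw
    · intro i j hf; fin_cases i <;> fin_cases j <;>
        first
        | rfl
        | exact absurd hf hab | exact absurd hf hab.symm
        | exact absurd hf hac | exact absurd hf hac.symm
        | exact absurd hf hbc | exact absurd hf hbc.symm
        | exact absurd hf huv | exact absurd hf huv.symm
        | exact absurd hf huw | exact absurd hf huw.symm
        | exact absurd hf hvw | exact absurd hf hvw.symm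
    · intro i j hf; fin_cases i <;> fin_cases j <;>
        first
        | rfl
        | exact absurd hf hab | exact absurd hf hab.symm
        | exact absurd hf hac | exact absurd hf hac.symm
        | exact absurd hf hbc | exact absurd hf hbc.symm
        | exact absurd hf huv | exact absurd hf huv.symm
        | exact absurd hf huw | exact absurd hf huw.symm
        | exact absurd hf hvw | exact absurd hf hvw.symm
    · intro i j; fin_cases i <;> fin_cases j <;>
        first
        | exact iff_of_true (by assumption) (by decide)
        | exact iff_of_false (by assumption) (by decide)
    · exact hAi3 _ (by intro i; fin_cases i <;> simp)
    · exact hBi3 _ (by intro i; fin_cases i <;> simp)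
end

section
/- For every integer k ≥ 3, the k×k binary matrix M defined by M[i,j] = 1 if and only if j = i or j = i + 1 (indices taken modulo k) does not have the Consecutive Ones Property. (Its corresponding bipartite graph is a chordless cycle of length 2k, the Tucker forbidden subgraph of type I.) -/
/-- A binary matrix has the Consecutive Ones Property: its columns can be permuted so
that in every row all ones appear consecutively. -/
def HasC1P {m n : ℕ} (M : Fin m → Fin n → Bool) : Prop :=
  ∃ σ : Equiv.Perm (Fin n), ∀ (i : Fin m) (j k l : Fin n),
    j ≤ k → k ≤ l → M i (σ j) = true → M i (σ l) = true → M i (σ k) = true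

/-- For every `k ≥ 3`, the `k × k` binary matrix with `M[i,j] = 1` iff `j = i` or
`j = i + 1` (indices modulo `k`) does not have the Consecutive Ones Property; its
bipartite graph is a chordless cycle of length `2k`, the Tucker forbidden subgraph of
type I. -/
theorem circulant_not_C1P (k : ℕ) (hk : 3 ≤ k) :
    ¬HasC1P (fun i j : Fin k => decide ((j : ℕ) = i ∨ (j : ℕ) = ((i : ℕ) + 1) % k)) := by
  rintro ⟨σ, hσ⟩
  have hk0 : 0 < k := by omega
  haveI : NeZero k := ⟨by omega⟩
  have hone : ((1 : Fin k) : ℕ) = 1 := by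
    rw [Fin.val_one']; exact Nat.mod_eq_of_lt (by omega)
  have hmod : ∀ a, k ≤ a → a < 2 * k → a % k = a - k := fun a h1 h2 => by
    rw [Nat.mod_eq_sub_mod h1, Nat.mod_eq_of_lt (by omega)]
  have hM : ∀ i j : Fin k,
      (decide ((j : ℕ) = i ∨ (j : ℕ) = ((i : ℕ) + 1) % k) = true) ↔ (j = i ∨ j = i + 1) := by
    intro i j
    rw [decide_eq_true_iff]
    constructor
    · rintro (h | h)
      · exact Or.inl (Fin.ext h)
      · right; apply Fin.ext; rw [Fin.val_add, hone]; exact h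
    · rintro (h | h)
      · exact Or.inl (by rw [h])
      · right; rw [h, Fin.val_add, hone]
  -- adjacency: positions of i and i+1 differ by exactly one
  have adj : ∀ i : Fin k,
      ((σ.symm i : ℕ) = (σ.symm (i + 1) : ℕ) + 1) ∨
      ((σ.symm (i + 1) : ℕ) = (σ.symm i : ℕ) + 1) := by
    intro i
    set p := σ.symm i with hp
    set q := σ.symm (i + 1) with hq
    have hpq : p ≠ q := by
      intro h
      have : i = i + 1 := by
        have := congrArg σ h
        simpa [hp, hq] using this
      have hv := congrArg Fin.val this
      rw [Fin.val_add, hone] at hv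
      have hlt := i.isLt
      rcases Nat.lt_or_ge ((i : ℕ) + 1) k with hc | hc
      · rw [Nat.mod_eq_of_lt hc] at hv; omega
      · have hek : (i : ℕ) + 1 = k := by omega
        rw [hek, Nat.mod_self] at hv
        omega
    have key : ∀ a b : Fin k, (a : ℕ) < b → ({a, b} : Set (Fin k)) = {p, q} →
        (b : ℕ) = a + 1 := by
      intro a b hab hset
      by_contra hne
      have hm : (a : ℕ) + 1 < k := by
        have := b.isLt; omega
      set m : Fin k := ⟨(a : ℕ) + 1, hm⟩ with hmdef
      have h1 : a ≤ m := by simp [hmdef, Fin.le_def]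
      have h2 : m ≤ b := by simp [hmdef, Fin.le_def]; omega
      have hMp : (fun i j : Fin k => decide ((j : ℕ) = i ∨ (j : ℕ) = ((i : ℕ) + 1) % k)) i (σ p) = true := by
        rw [hp, Equiv.apply_symm_apply, decide_eq_true_iff]
        exact Or.inl rfl
      have hMq : (fun i j : Fin k => decide ((j : ℕ) = i ∨ (j : ℕ) = ((i : ℕ) + 1) % k)) i (σ q) = true := by
        rw [hq, Equiv.apply_symm_apply, decide_eq_true_iff]
        right; rw [Fin.val_add, hone]
      have hMa : (fun i j : Fin k => decide ((j : ℕ) = i ∨ (j : ℕ) = ((i : ℕ) + 1) % k)) i (σ a) = true := by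
        have ha : a = p ∨ a = q := by
          have : a ∈ ({p, q} : Set (Fin k)) := by rw [← hset]; left; rfl
          simpa using this
        rcases ha with h | h <;> rw [h] <;> assumption
      have hMb : (fun i j : Fin k => decide ((j : ℕ) = i ∨ (j : ℕ) = ((i : ℕ) + 1) % k)) i (σ b) = true := by
        have hb : b = p ∨ b = q := by
          have : b ∈ ({p, q} : Set (Fin k)) := by rw [← hset]; right; rfl
          simpa using this
        rcases hb with h | h <;> rw [h] <;> assumption
      have hMm := hσ i a m b h1 h2 hMa hMb
      rw [hM] at hMm
      have hm' : m = p ∨ m = q := by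
        rcases hMm with h | h
        · left; rw [hp, ← h]; simp
        · right; rw [hq, ← h]; simp
      have hmpq : m ∈ ({a, b} : Set (Fin k)) := by
        rw [hset]; rcases hm' with h | h
        · left; exact h
        · right; exact h
      simp only [Set.mem_insert_iff, Set.mem_singleton_iff] at hmpq
      rcases hmpq with h | h <;>
      · rw [hmdef] at h
        have hv := congrArg Fin.val h
        simp only [Fin.val_mk] at hv
        omega
    rcases lt_trichotomy (p : ℕ) (q : ℕ) with h | h | h
    · right; exact key p q h rfl
    · exact absurd (Fin.ext h) hpq
    · left; exact key q p h (by rw [Set.pair_comm])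
  -- now derive contradiction
  set i₀ := σ 0 with hi₀
  have h0 : σ.symm i₀ = 0 := by simp [hi₀]
  have hA := adj i₀
  rw [h0] at hA
  have hnext : (σ.symm (i₀ + 1) : ℕ) = 1 := by
    rcases hA with h | h
    · simp at h
    · simpa using h
  have hB := adj (i₀ - 1)
  have hsub : i₀ - 1 + 1 = i₀ := sub_add_cancel i₀ 1
  rw [hsub, h0] at hB
  have hprev : (σ.symm (i₀ - 1) : ℕ) = 1 := by
    rcases hB with h | h
    · simpa using h
    · simp at h
  have heq : σ.symm (i₀ + 1) = σ.symm (i₀ - 1) := Fin.ext (by rw [hnext, hprev])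
  have heq2 : i₀ + 1 = i₀ - 1 := by
    have := congrArg σ heq
    simpa using this
  have hv : ((i₀ : ℕ) + 1) % k = (k - 1 + (i₀ : ℕ)) % k := by
    have hv0 := congrArg Fin.val heq2
    rw [Fin.val_add, hone, Fin.sub_def, hone] at hv0
    simpa using hv0
  have hlt := i₀.isLt
  rcases Nat.lt_or_ge ((i₀ : ℕ) + 1) k with hc | hc
  · rw [Nat.mod_eq_of_lt hc] at hv
    rcases Nat.eq_zero_or_pos (i₀ : ℕ) with h0' | h0'
    · rw [h0', Nat.add_zero, Nat.mod_eq_of_lt (by omega)] at hv; omega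
    · rw [hmod _ (by omega) (by omega)] at hv; omega
  · have hek : (i₀ : ℕ) + 1 = k := by omega
    rw [hek, Nat.mod_self, hmod _ (by omega) (by omega)] at hv
    omega
end

section
/- The 4×6 binary matrix [[1,0,0,1,0,0],[0,1,0,0,1,0],[0,0,1,0,0,1],[0,0,0,1,1,1]] does not have the Consecutive Ones Property. (Its corresponding bipartite graph is the Tucker forbidden subgraph G_IV.) -/
set_option maxRecDepth 100000
set_option maxHeartbeats 2000000

def tail1 : List Bool → Bool
  | [] => true
  | true :: t => tail1 t
  | false :: t => t.all (fun b => !b)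

def rowOK : List Bool → Bool
  | [] => true
  | false :: t => rowOK t
  | true :: t => tail1 t

lemma tail1_false {r : List Bool} (h : tail1 r = false) :
    ∃ k l : ℕ, k < l ∧ r[k]? = some false ∧ r[l]? = some true := by
  induction r with
  | nil => simp [tail1] at h
  | cons b t ih =>
    cases b with
    | true =>
      obtain ⟨k, l, hkl, hk, hl⟩ := ih h
      exact ⟨k+1, l+1, by omega, by simpa, by simpa⟩
    | false =>
      simp only [tail1, List.all_eq_false] at h
      obtain ⟨x, hx, hxt⟩ := h
      have hxtrue : x = true := by simpa using hxt
      subst hxtrue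
      obtain ⟨l, hl, hget⟩ := List.getElem_of_mem hx
      refine ⟨0, l+1, by omega, by simp, ?_⟩
      simp [List.getElem?_eq_getElem, hl, hget]

lemma rowOK_false {r : List Bool} (h : rowOK r = false) :
    ∃ j k l : ℕ, j ≤ k ∧ k ≤ l ∧ r[j]? = some true ∧ r[k]? = some false ∧ r[l]? = some true := by
  induction r with
  | nil => simp [rowOK] at h
  | cons b t ih =>
    cases b with
    | false =>
      obtain ⟨j, k, l, h1, h2, hj, hk, hl⟩ := ih h
      exact ⟨j+1, k+1, l+1, by omega, by omega, by simpa, by simpa, by simpa⟩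
    | true =>
      obtain ⟨k, l, hkl, hk, hl⟩ := tail1_false h
      exact ⟨0, k+1, l+1, by omega, by omega, by simp, by simpa, by simpa⟩

def Mmat : Fin 4 → Fin 6 → Bool := fun i j =>
  (!![true,false,false,true,false,false;
      false,true,false,false,true,false;
      false,false,true,false,false,true;
      false,false,false,true,true,true] : Matrix (Fin 4) (Fin 6) Bool) i j

lemma all_perms_bad :
    ((List.finRange 6).permutations'.all fun q =>
      (List.finRange 4).any fun i => !rowOK (q.map fun j => Mmat i j)) = true := by
  decide

/-- The `4 × 6` binary matrix
`[[1,0,0,1,0,0],[0,1,0,0,1,0],[0,0,1,0,0,1],[0,0,0,1,1,1]]`, whose bipartite graph is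
the Tucker forbidden subgraph `G_IV`, does not have the Consecutive Ones Property. -/
theorem GIV_matrix_not_C1P :
    ¬HasC1P (fun i j => (!![true,false,false,true,false,false;
                            false,true,false,false,true,false;
                            false,false,true,false,false,true;
                            false,false,false,true,true,true] : Matrix (Fin 4) (Fin 6) Bool) i j) := by
  rintro ⟨σ, h⟩
  have hperm : List.Perm ((List.finRange 6).map σ) (List.finRange 6) := by
    apply List.perm_of_nodup_nodup_toFinset_eq
    · exact (List.nodup_finRange 6).map σ.injective
    · exact List.nodup_finRange 6
    · ext x
      simp only [List.mem_toFinset, List.mem_map, List.mem_finRange, true_and]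
      exact ⟨fun _ => trivial, fun _ => ⟨σ.symm x, σ.apply_symm_apply x⟩⟩
  have hmem : (List.finRange 6).map σ ∈ (List.finRange 6).permutations' :=
    List.mem_permutations'.2 hperm
  have hall := all_perms_bad
  rw [List.all_eq_true] at hall
  have hany := hall _ hmem
  rw [List.any_eq_true] at hany
  obtain ⟨i, -, hi⟩ := hany
  rw [Bool.not_eq_true'] at hi
  obtain ⟨j, k, l, hjk, hkl, hj, hk, hl⟩ := rowOK_false hi
  set r := (((List.finRange 6).map σ).map fun j => Mmat i j) with hr
  have hlen : r.length = 6 := by simp [hr]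
  obtain ⟨hjlt, hjv⟩ := List.getElem?_eq_some_iff.mp hj
  obtain ⟨hklt, hkv⟩ := List.getElem?_eq_some_iff.mp hk
  obtain ⟨hllt, hlv⟩ := List.getElem?_eq_some_iff.mp hl
  rw [hlen] at hjlt hklt hllt
  simp only [hr, List.getElem_map, List.getElem_finRange, Fin.cast_mk] at hjv hkv hlv
  have hT : Mmat i (σ ⟨k, by omega⟩) = true :=
    h i ⟨j, by omega⟩ ⟨k, by omega⟩ ⟨l, by omega⟩ hjk hkl hjv hlv
  exact Bool.false_ne_true (hkv.symm.trans hT)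
end

section
/- In the bipartite graph G_IV, the three white vertices x, y, z form a white asteroidal triple, and the minimum possible total length of three connecting paths (a path from x to y avoiding N(z), a path from x to z avoiding N(y), and a path from y to z avoiding N(x)) equals 18; in particular each of these paths has length exactly 6, so the total path length exceeds the number of vertices of G_IV by 8. -/
open SimpleGraph

/-- An asteroidal triple: an independent set of three vertices such that every pair of
them is joined by a path avoiding the neighborhood of the third vertex. -/
def IsAsteroidalTriple {V : Type*} (G : SimpleGraph V) (u v w : V) : Prop :=
  u ≠ v ∧ u ≠ w ∧ v ≠ w ∧ ¬G.Adj u v ∧ ¬G.Adj u w ∧ ¬G.Adj v w ∧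
  (∃ p : G.Walk u v, ∀ t ∈ p.support, ¬G.Adj w t) ∧
  (∃ p : G.Walk u w, ∀ t ∈ p.support, ¬G.Adj v t) ∧
  (∃ p : G.Walk v w, ∀ t ∈ p.support, ¬G.Adj u t)

/-- Tucker's forbidden subgraph `G_IV`: black vertices `a,b,c,d` (rows `0,1,2,3`) and
white vertices `x,y,z,u,v,w` (columns `0,1,2,3,4,5`), with edge set exactly
`{a,x},{a,u},{b,y},{b,v},{c,z},{c,w},{d,u},{d,v},{d,w}`. -/
def GIV : SimpleGraph (Fin 4 ⊕ Fin 6) :=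
  graphOf (fun i j => (!![true,false,false,true,false,false;
                          false,true,false,false,true,false;
                          false,false,true,false,false,true;
                          false,false,false,true,true,true] : Matrix (Fin 4) (Fin 6) Bool) i j)

instance : DecidableRel GIV.Adj := fun p q => by
  unfold GIV graphOf
  rw [SimpleGraph.fromRel_adj]
  infer_instance

/-- Potential-function lower bound for walks avoiding the neighborhood of `z`. -/
lemma walk_pot {V : Type*} (G : SimpleGraph V) (z : V) (f : V → ℕ)
    (hf : ∀ p q, G.Adj p q → ¬G.Adj z p → ¬G.Adj z q → f q ≤ f p + 1) :
    ∀ {u v : V} (p : G.Walk u v), (∀ t ∈ p.support, ¬G.Adj z t) →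
      f v ≤ f u + p.length := by
  intro u v p
  induction p with
  | nil => intro _; simp
  | cons h q ih =>
    intro hav
    have h1 : ¬G.Adj z _ := hav _ (SimpleGraph.Walk.start_mem_support _)
    have h2 : ¬G.Adj z _ := hav _ (by
      rw [SimpleGraph.Walk.support_cons]
      exact List.mem_cons_of_mem _ q.start_mem_support)
    have := ih (fun t ht => hav t (by
      rw [SimpleGraph.Walk.support_cons]; exact List.mem_cons_of_mem _ ht))
    have := hf _ _ h h1 h2
    simp only [SimpleGraph.Walk.length_cons]
    omega

-- abbreviations
private abbrev X : Fin 4 ⊕ Fin 6 := Sum.inr 0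
private abbrev Y : Fin 4 ⊕ Fin 6 := Sum.inr 1
private abbrev Z : Fin 4 ⊕ Fin 6 := Sum.inr 2

/-- potential for walks x→y avoiding N(z) -/
private def f1 : Fin 4 ⊕ Fin 6 → ℕ := Sum.elim ![1, 5, 0, 3] ![0, 6, 0, 2, 4, 4]
/-- potential for walks x→z avoiding N(y) -/
private def f2 : Fin 4 ⊕ Fin 6 → ℕ := Sum.elim ![1, 0, 5, 3] ![0, 0, 6, 2, 4, 4]
/-- potential for walks y→z avoiding N(x) -/
private def f3 : Fin 4 ⊕ Fin 6 → ℕ := Sum.elim ![0, 1, 5, 3] ![0, 0, 6, 4, 2, 4]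

private def pXY : GIV.Walk X Y :=
  .cons (show GIV.Adj X (Sum.inl 0) by decide)
  (.cons (show GIV.Adj (Sum.inl 0 : Fin 4 ⊕ Fin 6) (Sum.inr 3) by decide)
  (.cons (show GIV.Adj (Sum.inr 3 : Fin 4 ⊕ Fin 6) (Sum.inl 3) by decide)
  (.cons (show GIV.Adj (Sum.inl 3 : Fin 4 ⊕ Fin 6) (Sum.inr 4) by decide)
  (.cons (show GIV.Adj (Sum.inr 4 : Fin 4 ⊕ Fin 6) (Sum.inl 1) by decide)
  (.cons (show GIV.Adj (Sum.inl 1 : Fin 4 ⊕ Fin 6) Y by decide) .nil)))))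
    -- x - a - u - d - v - b - y

private def pXZ : GIV.Walk X Z :=
  .cons (show GIV.Adj X (Sum.inl 0) by decide)
  (.cons (show GIV.Adj (Sum.inl 0 : Fin 4 ⊕ Fin 6) (Sum.inr 3) by decide)
  (.cons (show GIV.Adj (Sum.inr 3 : Fin 4 ⊕ Fin 6) (Sum.inl 3) by decide)
  (.cons (show GIV.Adj (Sum.inl 3 : Fin 4 ⊕ Fin 6) (Sum.inr 5) by decide)
  (.cons (show GIV.Adj (Sum.inr 5 : Fin 4 ⊕ Fin 6) (Sum.inl 2) by decide)
  (.cons (show GIV.Adj (Sum.inl 2 : Fin 4 ⊕ Fin 6) Z by decide) .nil)))))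
    -- x - a - u - d - w - c - z

private def pYZ : GIV.Walk Y Z :=
  .cons (show GIV.Adj Y (Sum.inl 1) by decide)
  (.cons (show GIV.Adj (Sum.inl 1 : Fin 4 ⊕ Fin 6) (Sum.inr 4) by decide)
  (.cons (show GIV.Adj (Sum.inr 4 : Fin 4 ⊕ Fin 6) (Sum.inl 3) by decide)
  (.cons (show GIV.Adj (Sum.inl 3 : Fin 4 ⊕ Fin 6) (Sum.inr 5) by decide)
  (.cons (show GIV.Adj (Sum.inr 5 : Fin 4 ⊕ Fin 6) (Sum.inl 2) by decide)
  (.cons (show GIV.Adj (Sum.inl 2 : Fin 4 ⊕ Fin 6) Z by decide) .nil)))))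
    -- y - b - v - d - w - c - z

private lemma pXY_avoid : ∀ t ∈ pXY.support, ¬GIV.Adj Z t := by
  intro t ht
  simp only [pXY, SimpleGraph.Walk.support_cons, SimpleGraph.Walk.support_nil,
    List.mem_cons, List.not_mem_nil, or_false] at ht
  rcases ht with rfl|rfl|rfl|rfl|rfl|rfl|rfl <;> decide

private lemma pXY_len : pXY.length = 6 := rfl

private lemma pXZ_avoid : ∀ t ∈ pXZ.support, ¬GIV.Adj Y t := by
  intro t ht
  simp only [pXZ, SimpleGraph.Walk.support_cons, SimpleGraph.Walk.support_nil,
    List.mem_cons, List.not_mem_nil, or_false] at ht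
  rcases ht with rfl|rfl|rfl|rfl|rfl|rfl|rfl <;> decide

private lemma pXZ_len : pXZ.length = 6 := rfl

private lemma pYZ_avoid : ∀ t ∈ pYZ.support, ¬GIV.Adj X t := by
  intro t ht
  simp only [pYZ, SimpleGraph.Walk.support_cons, SimpleGraph.Walk.support_nil,
    List.mem_cons, List.not_mem_nil, or_false] at ht
  rcases ht with rfl|rfl|rfl|rfl|rfl|rfl|rfl <;> decide

private lemma pYZ_len : pYZ.length = 6 := rfl

private lemma lbXY : ∀ p : GIV.Walk X Y, (∀ t ∈ p.support, ¬GIV.Adj Z t) → 6 ≤ p.length := by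
  intro p hp
  have hf : ∀ a b, GIV.Adj a b → ¬GIV.Adj Z a → ¬GIV.Adj Z b → f1 b ≤ f1 a + 1 := by decide
  have := walk_pot GIV Z f1 hf p hp
  simpa [f1] using this

private lemma lbXZ : ∀ p : GIV.Walk X Z, (∀ t ∈ p.support, ¬GIV.Adj Y t) → 6 ≤ p.length := by
  intro p hp
  have hf : ∀ a b, GIV.Adj a b → ¬GIV.Adj Y a → ¬GIV.Adj Y b → f2 b ≤ f2 a + 1 := by decide
  have := walk_pot GIV Y f2 hf p hp
  simpa [f2] using this

private lemma lbYZ : ∀ p : GIV.Walk Y Z, (∀ t ∈ p.support, ¬GIV.Adj X t) → 6 ≤ p.length := by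
  intro p hp
  have hf : ∀ a b, GIV.Adj a b → ¬GIV.Adj X a → ¬GIV.Adj X b → f3 b ≤ f3 a + 1 := by decide
  have := walk_pot GIV X f3 hf p hp
  simpa [f3] using this

/-- In `G_IV` the white vertices `x, y, z` (columns `0, 1, 2`) form a white asteroidal
triple; the minimum length of each of the three connecting paths (each avoiding the
neighborhood of the third vertex) is `6`, the minimum total length of the three paths
is `18`, which exceeds the number of vertices of `G_IV` by `8`. -/
theorem GIV_asteroidal_triple :
    IsAsteroidalTriple GIV (Sum.inr 0) (Sum.inr 1) (Sum.inr 2) ∧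
    ((∃ p : GIV.Walk (Sum.inr 0) (Sum.inr 1),
        (∀ t ∈ p.support, ¬GIV.Adj (Sum.inr 2) t) ∧ p.length = 6) ∧
      ∀ p : GIV.Walk (Sum.inr 0) (Sum.inr 1),
        (∀ t ∈ p.support, ¬GIV.Adj (Sum.inr 2) t) → 6 ≤ p.length) ∧
    ((∃ p : GIV.Walk (Sum.inr 0) (Sum.inr 2),
        (∀ t ∈ p.support, ¬GIV.Adj (Sum.inr 1) t) ∧ p.length = 6) ∧
      ∀ p : GIV.Walk (Sum.inr 0) (Sum.inr 2),
        (∀ t ∈ p.support, ¬GIV.Adj (Sum.inr 1) t) → 6 ≤ p.length) ∧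
    ((∃ p : GIV.Walk (Sum.inr 1) (Sum.inr 2),
        (∀ t ∈ p.support, ¬GIV.Adj (Sum.inr 0) t) ∧ p.length = 6) ∧
      ∀ p : GIV.Walk (Sum.inr 1) (Sum.inr 2),
        (∀ t ∈ p.support, ¬GIV.Adj (Sum.inr 0) t) → 6 ≤ p.length) ∧
    ((∃ (p : GIV.Walk (Sum.inr 0) (Sum.inr 1)) (q : GIV.Walk (Sum.inr 0) (Sum.inr 2))
        (r : GIV.Walk (Sum.inr 1) (Sum.inr 2)),
        (∀ t ∈ p.support, ¬GIV.Adj (Sum.inr 2) t) ∧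
        (∀ t ∈ q.support, ¬GIV.Adj (Sum.inr 1) t) ∧
        (∀ t ∈ r.support, ¬GIV.Adj (Sum.inr 0) t) ∧
        p.length + q.length + r.length = 18) ∧
      ∀ (p : GIV.Walk (Sum.inr 0) (Sum.inr 1)) (q : GIV.Walk (Sum.inr 0) (Sum.inr 2))
        (r : GIV.Walk (Sum.inr 1) (Sum.inr 2)),
        (∀ t ∈ p.support, ¬GIV.Adj (Sum.inr 2) t) →
        (∀ t ∈ q.support, ¬GIV.Adj (Sum.inr 1) t) →
        (∀ t ∈ r.support, ¬GIV.Adj (Sum.inr 0) t) →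
        18 ≤ p.length + q.length + r.length) ∧
    18 = Fintype.card (Fin 4 ⊕ Fin 6) + 8 := by
  refine ⟨⟨by decide, by decide, by decide, by decide, by decide, by decide,
      ⟨pXY, pXY_avoid⟩, ⟨pXZ, pXZ_avoid⟩, ⟨pYZ, pYZ_avoid⟩⟩,
    ⟨⟨pXY, pXY_avoid, pXY_len⟩, lbXY⟩,
    ⟨⟨pXZ, pXZ_avoid, pXZ_len⟩, lbXZ⟩,
    ⟨⟨pYZ, pYZ_avoid, pYZ_len⟩, lbYZ⟩,
    ⟨⟨pXY, pXZ, pYZ, pXY_avoid, pXZ_avoid, pYZ_avoid, rfl⟩, ?_⟩, by simp⟩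
  intro p q r hp hq hr
  have := lbXY p hp
  have := lbXZ q hq
  have := lbYZ r hr
  omega
end
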